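/- arXiv:2004.04508 — 4 statements merged into one kernel-verified Lean document; each statement's English description precedes it below -/
import Mathlib

section
/- (Strict form of feasibility at a generic parameter.) Let W ⊆ ℝ^E be a linear subspace and h ∈ ℝ^E a parameter such that ⟨h, γ⟩ ≠ 0 for every circuit γ of W. Then a sign vector α : E → {+1,−1} is h-feasible if and only if ⟨h, u⟩ > 0 for every nonzero u ∈ W satisfying α(e)·u(e) ≥ 0 for all e ∈ E. (Equivalently: for generic h, feasibility of α is equivalent to the functional ⟨−h,·⟩ being bounded above and proper on the corresponding cone of the Gale dual arrangement.) -/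
/-- The standard inner product on `ℝ^E`. -/
noncomputable def dot {E : Type*} [Fintype E] (x y : E → ℝ) : ℝ := ∑ e, x e * y e

/-- The orthogonal complement of a subspace `W ⊆ ℝ^E` with respect to the
standard inner product. -/
def perp {E : Type*} [Fintype E] (W : Submodule ℝ (E → ℝ)) : Set (E → ℝ) :=
  {u | ∀ w ∈ W, dot w u = 0}

/-- A sign vector `α` is `h`-feasible if there exists `v ∈ ℝ^E` with `v - h ∈ Wᗮ`
and `α e * v e ≥ 0` for all `e`. -/
def IsFeasible {E : Type*} [Fintype E] (W : Submodule ℝ (E → ℝ)) (h α : E → ℝ) : Prop :=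
  ∃ v : E → ℝ, v - h ∈ perp W ∧ ∀ e, 0 ≤ α e * v e

/-- A circuit of a subset `U ⊆ ℝ^E` is a nonzero element of `U` whose support is
minimal under inclusion among supports of nonzero elements of `U`. -/
def IsCircuit {E : Type*} [Fintype E] (U : Set (E → ℝ)) (u : E → ℝ) : Prop :=
  u ∈ U ∧ u ≠ 0 ∧
    ∀ w ∈ U, w ≠ 0 → {e | w e ≠ 0} ⊆ {e | u e ≠ 0} → {e | w e ≠ 0} = {e | u e ≠ 0}

/-! ### Auxiliary lemmas -/

section Aux

open Finset

lemma cone_caratheodory {M : Type*} [AddCommGroup M] [Module ℝ M] {ι : Type*}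
    (g : ι → M) (t : Finset ι) :
    ∀ (c : ι → ℝ), (∀ i ∈ t, 0 ≤ c i) →
      ∃ t' ⊆ t, (LinearIndependent ℝ (fun i : t' => g i)) ∧
        ∃ d : ι → ℝ, (∀ i ∈ t', 0 ≤ d i) ∧ ∑ i ∈ t', d i • g i = ∑ i ∈ t, c i • g i := by
  classical
  induction t using Finset.strongInduction with
  | _ t IH =>
    intro c hc
    by_cases hli : LinearIndependent ℝ (fun i : t => g i)
    · exact ⟨t, subset_rfl, hli, c, hc, rfl⟩
    · obtain ⟨f, hsum, j, hj⟩ := Fintype.not_linearIndependent_iff.mp hli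
      have key : ∀ f : t → ℝ, (∑ i, f i • g ↑i = 0) → (∃ j, 0 < f j) →
          ∃ t' ⊆ t, (LinearIndependent ℝ (fun i : t' => g i)) ∧
            ∃ d : ι → ℝ, (∀ i ∈ t', 0 ≤ d i) ∧ ∑ i ∈ t', d i • g i = ∑ i ∈ t, c i • g i := by
        intro f hsum ⟨j, hjpos⟩
        set T : Finset t := Finset.univ.filter (fun i => 0 < f i) with hT
        have hTne : T.Nonempty := ⟨j, by simp [hT, hjpos]⟩
        obtain ⟨i₀, hi₀T, hmin⟩ := T.exists_min_image (fun i => c ↑i / f i) hTne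
        have hi₀pos : 0 < f i₀ := by simpa [hT] using hi₀T
        set r : ℝ := c ↑i₀ / f i₀ with hr
        have hr0 : 0 ≤ r := div_nonneg (hc _ i₀.2) hi₀pos.le
        set F : ι → ℝ := fun i => if h : i ∈ t then f ⟨i, h⟩ else 0 with hF
        set c' : ι → ℝ := fun i => c i - r * F i with hc'def
        have hFsum : ∑ i ∈ t, F i • g i = 0 := by
          rw [← Finset.sum_attach t (fun i => F i • g i)]
          simpa [hF] using hsum
        have hc'nonneg : ∀ i ∈ t.erase i₀.1, 0 ≤ c' i := by
          intro i hi
          have hit : i ∈ t := Finset.mem_of_mem_erase hi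
          rcases le_or_gt (F i) 0 with hFi | hFi
          · have h1 : r * F i ≤ 0 := mul_nonpos_of_nonneg_of_nonpos hr0 hFi
            have h2 := hc i hit
            simp only [hc'def]; linarith
          · have hiT : (⟨i, hit⟩ : t) ∈ T := by
              simp only [hT, Finset.mem_filter, Finset.mem_univ, true_and]
              simpa [hF, hit] using hFi
            have h1 := hmin _ hiT
            have h2 : r ≤ c i / F i := by simpa [hF, hit] using h1
            have h3 : r * F i ≤ c i := by
              rw [le_div_iff₀ hFi] at h2; linarith
            simp only [hc'def]; linarith
        have hc'i₀ : c' i₀.1 = 0 := by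
          have hFi₀ : F i₀.1 = f i₀ := by simp [hF, i₀.2]
          simp only [hc'def, hFi₀, hr]
          field_simp; ring
        have hsum' : ∑ i ∈ t.erase i₀.1, c' i • g i = ∑ i ∈ t, c i • g i := by
          rw [Finset.sum_erase _ (by rw [hc'i₀, zero_smul])]
          have : ∑ i ∈ t, c' i • g i
              = ∑ i ∈ t, c i • g i - r • ∑ i ∈ t, F i • g i := by
            rw [Finset.smul_sum, ← Finset.sum_sub_distrib]
            refine Finset.sum_congr rfl fun i _ => ?_
            simp [hc'def, sub_smul, smul_smul]
          rw [this, hFsum, smul_zero, sub_zero]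
        obtain ⟨t', ht'sub, ht'li, d, hd, hdsum⟩ :=
          IH (t.erase i₀.1) (Finset.erase_ssubset i₀.2) c' hc'nonneg
        exact ⟨t', ht'sub.trans (Finset.erase_subset _ _), ht'li, d, hd, by rw [hdsum, hsum']⟩
      rcases hj.lt_or_gt with hneg | hpos
      · exact key (-f) (by simpa [neg_smul] using congrArg Neg.neg hsum)
          ⟨j, by simpa using hneg⟩
      · exact key f hsum ⟨j, hpos⟩

/-- The cone over a linearly independent finite family is closed. -/
lemma isClosed_cone_of_li {ι : Type*} {M : Type*} [NormedAddCommGroup M] [NormedSpace ℝ M]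
    (g : ι → M) (t : Finset ι)
    (hli : LinearIndependent ℝ (fun i : t => g i)) :
    IsClosed {x : M | ∃ c : ι → ℝ, (∀ i ∈ t, 0 ≤ c i) ∧ x = ∑ i ∈ t, c i • g i} := by
  classical
  set L : (t → ℝ) →ₗ[ℝ] M :=
    { toFun := fun c => ∑ i, c i • g ↑i
      map_add' := by intro a b; simp [add_smul, Finset.sum_add_distrib]
      map_smul' := by intro m a; simp [smul_smul, Finset.smul_sum] } with hL
  have hker : LinearMap.ker L = ⊥ := by
    rw [LinearMap.ker_eq_bot']
    intro c hc0
    have := Fintype.linearIndependent_iff.mp hli c (by simpa [hL] using hc0)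
    funext i; exact this i
  have hset : {x : M | ∃ c : ι → ℝ, (∀ i ∈ t, 0 ≤ c i) ∧ x = ∑ i ∈ t, c i • g i}
      = L '' {c : t → ℝ | ∀ i, 0 ≤ c i} := by
    ext x
    constructor
    · rintro ⟨c, hc, rfl⟩
      refine ⟨fun i => c ↑i, fun i => hc _ i.2, ?_⟩
      simp only [hL, LinearMap.coe_mk, AddHom.coe_mk]
      exact Finset.sum_coe_sort t (fun i => c i • g i)
    · rintro ⟨c, hc, rfl⟩
      refine ⟨fun i => if h : i ∈ t then c ⟨i, h⟩ else 0, fun i hi => by simp [hi]; exact hc _, ?_⟩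
      simp only [hL, LinearMap.coe_mk, AddHom.coe_mk]
      rw [← Finset.sum_attach t (fun i => (if h : i ∈ t then c ⟨i, h⟩ else 0) • g i)]
      refine Finset.sum_congr rfl fun i _ => by simp [i.2]
  have hclosed : IsClosed {c : t → ℝ | ∀ i, 0 ≤ c i} := by
    have : {c : t → ℝ | ∀ i, 0 ≤ c i} = ⋂ i, (fun c : t → ℝ => c i) ⁻¹' Set.Ici 0 := by
      ext; simp [Set.mem_iInter]
    rw [this]
    exact isClosed_iInter fun i => isClosed_Ici.preimage (continuous_apply i)
  rw [hset]
  exact (L.isClosedEmbedding_of_injective hker).isClosedMap _ hclosed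

/-- A finitely generated cone is closed. -/
lemma isClosed_cone {ι : Type*} [Fintype ι] {M : Type*} [NormedAddCommGroup M] [NormedSpace ℝ M]
    (g : ι → M) :
    IsClosed {x : M | ∃ c : ι → ℝ, (∀ i, 0 ≤ c i) ∧ x = ∑ i, c i • g i} := by
  classical
  have hrepr : {x : M | ∃ c : ι → ℝ, (∀ i, 0 ≤ c i) ∧ x = ∑ i, c i • g i}
      = ⋃ t ∈ {t : Finset ι | LinearIndependent ℝ (fun i : t => g i)},
          {x : M | ∃ c : ι → ℝ, (∀ i ∈ t, 0 ≤ c i) ∧ x = ∑ i ∈ t, c i • g i} := by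
    ext x
    simp only [Set.mem_iUnion, Set.mem_setOf_eq, exists_prop]
    constructor
    · rintro ⟨c, hc, rfl⟩
      obtain ⟨t', _, hli, d, hd, hsum⟩ :=
        cone_caratheodory g Finset.univ c (fun i _ => hc i)
      exact ⟨t', hli, d, hd, hsum.symm⟩
    · rintro ⟨t, hli, c, hc, rfl⟩
      refine ⟨fun i => if i ∈ t then c i else 0,
        fun i => by by_cases hi : i ∈ t <;> simp [hi] <;> exact hc _ hi, ?_⟩
      rw [← Finset.sum_subset (Finset.subset_univ t) (fun i _ hi => by simp [hi])]
      exact Finset.sum_congr rfl fun i hi => by simp [hi]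
  rw [hrepr]
  exact Set.Finite.isClosed_biUnion (Set.toFinite _)
    (fun t ht => isClosed_cone_of_li g t ht)

variable {E : Type*} [Fintype E]

lemma dot_comm (x y : E → ℝ) : dot x y = dot y x := by
  simp [dot, mul_comm]

lemma dot_add_right (w a b : E → ℝ) : dot w (a + b) = dot w a + dot w b := by
  simp [dot, mul_add, Finset.sum_add_distrib]

lemma dot_smul_right (w : E → ℝ) (c : ℝ) (a : E → ℝ) : dot w (c • a) = c * dot w a := by
  simp [dot, Finset.mul_sum, mul_left_comm]

lemma dot_neg_right (w a : E → ℝ) : dot w (-a) = -dot w a := by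
  simp [dot, Finset.sum_neg_distrib]

lemma dot_sub_right (w a b : E → ℝ) : dot w (a - b) = dot w a - dot w b := by
  simp [dot, mul_sub, Finset.sum_sub_distrib]

lemma dot_sum_right {κ : Type*} (w : E → ℝ) (s : Finset κ) (f : κ → (E → ℝ)) :
    dot w (∑ i ∈ s, f i) = ∑ i ∈ s, dot w (f i) := by
  simp only [dot, Finset.sum_apply, Finset.mul_sum]
  rw [Finset.sum_comm]

noncomputable abbrev euclEquiv (E : Type*) [Fintype E] : EuclideanSpace ℝ E ≃L[ℝ] (E → ℝ) :=
  PiLp.continuousLinearEquiv 2 ℝ (fun _ : E => ℝ)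

lemma inner_eq_dot (x y : EuclideanSpace ℝ E) :
    (inner ℝ x y : ℝ) = dot (euclEquiv E x) (euclEquiv E y) := by
  simp [dot, PiLp.inner_apply, RCLike.inner_apply, euclEquiv, mul_comm]

/-- Double orthogonal complement: if `y` is orthogonal to `perp W` then `y ∈ W`. -/
lemma mem_of_dot_perp_eq_zero (W : Submodule ℝ (E → ℝ)) (y : E → ℝ)
    (hy : ∀ w ∈ perp W, dot w y = 0) : y ∈ W := by
  set W' : Submodule ℝ (EuclideanSpace ℝ E) := W.comap (euclEquiv E).toLinearMap with hW'
  have memW' : ∀ x : EuclideanSpace ℝ E, x ∈ W' ↔ euclEquiv E x ∈ W := fun x => Iff.rfl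
  have hperp : ∀ u : EuclideanSpace ℝ E, u ∈ W'ᗮ ↔ euclEquiv E u ∈ perp W := by
    intro u
    rw [Submodule.mem_orthogonal]
    constructor
    · intro H w hw
      have := H ((euclEquiv E).symm w) (by rw [memW', ContinuousLinearEquiv.apply_symm_apply]; exact hw)
      rwa [inner_eq_dot, (euclEquiv E).apply_symm_apply] at this
    · intro H x hx
      rw [inner_eq_dot]
      exact H _ hx
  have hyW' : (euclEquiv E).symm y ∈ W'ᗮᗮ := by
    rw [Submodule.mem_orthogonal]
    intro x hx
    rw [inner_eq_dot, (euclEquiv E).apply_symm_apply]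
    exact hy _ ((hperp x).mp hx)
  rw [Submodule.orthogonal_orthogonal] at hyW'
  have := (memW' _).mp hyW'
  rwa [ContinuousLinearEquiv.apply_symm_apply] at this

/-- `perp W` as a submodule. -/
def perpSubmodule (W : Submodule ℝ (E → ℝ)) : Submodule ℝ (E → ℝ) where
  carrier := perp W
  zero_mem' := by intro w _; simp [dot]
  add_mem' := by
    intro a b ha hb w hw
    rw [dot_add_right, ha w hw, hb w hw, add_zero]
  smul_mem' := by
    intro c a ha w hw
    rw [dot_smul_right, ha w hw, mul_zero]

lemma sum_single [DecidableEq E] (v : E → ℝ) :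
    ∑ e, v e • (Pi.single e (1 : ℝ) : E → ℝ) = v := by
  classical
  funext e'
  rw [Finset.sum_apply]
  simp [Pi.single_apply]

/-- Existence of a circuit with support inside the support of a given nonzero element. -/
lemma exists_circuit_subset (W : Submodule ℝ (E → ℝ)) (u : E → ℝ)
    (huW : u ∈ W) (hu : u ≠ 0) :
    ∃ γ, IsCircuit (W : Set (E → ℝ)) γ ∧ {e | γ e ≠ 0} ⊆ {e | u e ≠ 0} := by
  set 𝒮 : Set (E → ℝ) := {w | w ∈ W ∧ w ≠ 0 ∧ {e | w e ≠ 0} ⊆ {e | u e ≠ 0}} with h𝒮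
  have hne : 𝒮.Nonempty := ⟨u, huW, hu, subset_rfl⟩
  obtain ⟨w, hw𝒮, hwmin⟩ :=
    Set.Finite.exists_minimalFor' (fun w => {e | w e ≠ 0}) 𝒮 (Set.toFinite _) hne
  refine ⟨w, ⟨hw𝒮.1, hw𝒮.2.1, ?_⟩, hw𝒮.2.2⟩
  intro w' hw'W hw'ne hw'sub
  have hw'𝒮 : w' ∈ 𝒮 := ⟨hw'W, hw'ne, hw'sub.trans hw𝒮.2.2⟩
  exact le_antisymm hw'sub (hwmin hw'𝒮 hw'sub)

end Aux

/-- Strict form of feasibility at a generic parameter: if `⟨h, γ⟩ ≠ 0` for every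
circuit `γ` of `W`, then `α` is `h`-feasible iff `⟨h, u⟩ > 0` for every nonzero
`u ∈ W` with `α e * u e ≥ 0` for all `e`. -/
theorem feasible_iff_strict_positive_of_generic {E : Type*} [Fintype E]
    (W : Submodule ℝ (E → ℝ)) (h : E → ℝ)
    (hgen : ∀ γ : E → ℝ, IsCircuit (W : Set (E → ℝ)) γ → dot h γ ≠ 0)
    (α : E → ℝ) (hα : ∀ e, α e = 1 ∨ α e = -1) :
    IsFeasible W h α ↔
      ∀ u ∈ W, u ≠ 0 → (∀ e, 0 ≤ α e * u e) → 0 < dot h u := by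
  classical
  have hα2 : ∀ e, α e * α e = 1 := by
    intro e; rcases hα e with he | he <;> rw [he] <;> norm_num
  constructor
  · -- Forward: feasibility implies strict positivity
    rintro ⟨v, hvperp, hvpos⟩ u huW hune hupos
    have hdot_eq : ∀ z ∈ W, dot h z = dot v z := by
      intro z hz
      have h0 : dot z (v - h) = 0 := hvperp z hz
      rw [dot_sub_right] at h0
      rw [dot_comm h z, dot_comm v z]
      linarith
    have termeq : ∀ e, v e * u e = (α e * v e) * (α e * u e) := by
      intro e
      have : (α e * v e) * (α e * u e) = (α e * α e) * (v e * u e) := by ring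
      rw [this, hα2 e, one_mul]
    have hnn : ∀ e ∈ Finset.univ, 0 ≤ v e * u e := fun e _ => by
      rw [termeq]; exact mul_nonneg (hvpos e) (hupos e)
    have hdotnn : 0 ≤ dot v u := Finset.sum_nonneg hnn
    rcases hdotnn.eq_or_lt with heq | hlt
    · exfalso
      have hzero : ∀ e, v e * u e = 0 := by
        intro e
        exact (Finset.sum_eq_zero_iff_of_nonneg hnn).mp heq.symm e (Finset.mem_univ e)
      obtain ⟨γ, hγcirc, hγsupp⟩ := exists_circuit_subset W u huW hune
      apply hgen γ hγcirc
      rw [hdot_eq γ hγcirc.1]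
      apply Finset.sum_eq_zero
      intro e _
      by_cases hγe : γ e = 0
      · rw [hγe, mul_zero]
      · have hue : u e ≠ 0 := hγsupp hγe
        have hve : v e = 0 := by
          rcases mul_eq_zero.mp (hzero e) with h' | h'
          · exact h'
          · exact absurd h' hue
        rw [hve, zero_mul]
    · rw [hdot_eq u huW]; exact hlt
  · -- Backward: strict positivity implies feasibility (separation argument)
    intro hstrict
    by_contra hnf
    -- the finitely generated cone S = O_α + W^⊥
    set Wp : Submodule ℝ (E → ℝ) := perpSubmodule W with hWp
    have hWpmem : ∀ w, w ∈ Wp ↔ w ∈ perp W := fun w => Iff.rfl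
    set b := Module.finBasis ℝ Wp with hb
    set n := Module.finrank ℝ Wp with hn
    set g : (E ⊕ (Fin n ⊕ Fin n)) → (E → ℝ) :=
      Sum.elim (fun e => α e • ((Pi.single e (1:ℝ) : E → ℝ) : E → ℝ))
        (Sum.elim (fun i => (b i : E → ℝ)) (fun i => -(b i : E → ℝ))) with hg
    set S : Set (E → ℝ) :=
      {x | ∃ c : (E ⊕ (Fin n ⊕ Fin n)) → ℝ, (∀ i, 0 ≤ c i) ∧ x = ∑ i, c i • g i} with hS
    have hSclosed : IsClosed S := isClosed_cone g
    -- basis expansion of elements of perp W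
    have hbasis : ∀ w (hw : w ∈ Wp),
        ∑ i, (b.repr ⟨w, hw⟩ i) • (b i : E → ℝ) = w := by
      intro w hw
      have := congrArg (Subtype.val) (b.sum_repr ⟨w, hw⟩)
      simp only [Submodule.coe_sum, Submodule.coe_smul] at this
      exact this
    -- membership in S: direction 1
    have hmemS : ∀ v w, (∀ e, 0 ≤ α e * v e) → w ∈ Wp → v + w ∈ S := by
      intro v w hv hw
      set r := b.repr ⟨w, hw⟩ with hrdef
      refine ⟨Sum.elim (fun e => α e * v e)
        (Sum.elim (fun i => max (r i) 0) (fun i => max (-(r i)) 0)), ?_, ?_⟩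
      · rintro (e | i | i)
        · exact hv e
        · exact le_max_right _ _
        · exact le_max_right _ _
      · rw [Fintype.sum_sum_type, Fintype.sum_sum_type]
        have h1 : ∑ e, (α e * v e) • (α e • (Pi.single e (1:ℝ) : E → ℝ)) = v := by
          have : ∀ e, (α e * v e) • (α e • (Pi.single e (1:ℝ) : E → ℝ))
              = v e • (Pi.single e (1:ℝ) : E → ℝ) := by
            intro e
            rw [smul_smul]
            congr 1
            have : α e * v e * α e = (α e * α e) * v e := by ring
            rw [this, hα2 e, one_mul]
          rw [Finset.sum_congr rfl (fun e _ => this e), sum_single]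
        have h2 : (∑ i, (max (r i) 0) • (b i : E → ℝ))
            + ∑ i, (max (-(r i)) 0) • (-(b i : E → ℝ)) = w := by
          rw [← Finset.sum_add_distrib]
          have : ∀ i, (max (r i) 0) • (b i : E → ℝ)
              + (max (-(r i)) 0) • (-(b i : E → ℝ)) = (r i) • (b i : E → ℝ) := by
            intro i
            rw [smul_neg, ← sub_eq_add_neg, ← sub_smul,
              max_zero_sub_max_neg_zero_eq_self]
          rw [Finset.sum_congr rfl (fun i _ => this i)]
          exact hbasis w hw
        simp only [hg, Sum.elim_inl, Sum.elim_inr]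
        rw [h1, h2]
    -- membership in S: direction 2
    have hmemS' : ∀ x ∈ S, ∃ v w, (∀ e, 0 ≤ α e * v e) ∧ w ∈ Wp ∧ x = v + w := by
      rintro x ⟨c, hc, rfl⟩
      refine ⟨fun e => c (Sum.inl e) * α e,
        ∑ i : Fin n ⊕ Fin n, c (Sum.inr i) • g (Sum.inr i), ?_, ?_, ?_⟩
      · intro e
        have : α e * (c (Sum.inl e) * α e) = c (Sum.inl e) * (α e * α e) := by ring
        rw [this, hα2 e, mul_one]
        exact hc _
      · apply Submodule.sum_mem
        rintro (i | i) _
        · apply Submodule.smul_mem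
          simp only [hg, Sum.elim_inr, Sum.elim_inl]
          exact (b i).2
        · apply Submodule.smul_mem
          simp only [hg, Sum.elim_inr]
          exact Wp.neg_mem (b i).2
      · rw [Fintype.sum_sum_type]
        congr 1
        have : ∀ e, c (Sum.inl e) • g (Sum.inl e)
            = (c (Sum.inl e) * α e) • (Pi.single e (1:ℝ) : E → ℝ) := by
          intro e
          simp only [hg, Sum.elim_inl]
          rw [smul_smul]
        rw [Finset.sum_congr rfl (fun e _ => this e)]
        exact (sum_single _)
    -- h is not in S
    have hhS : h ∉ S := by
      intro hmem
      obtain ⟨v, w, hv, hw, hvw⟩ := hmemS' h hmem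
      apply hnf
      refine ⟨v, ?_, hv⟩
      have : v - h = -w := by rw [hvw]; ring_nf
      rw [this]
      exact (hWpmem _).mp (Wp.neg_mem hw)
    -- set up the separation in Euclidean space
    set K : ConvexCone ℝ (EuclideanSpace ℝ E) :=
      { carrier := (euclEquiv E) ⁻¹' S
        smul_mem' := by
          rintro c hcpos x hx
          obtain ⟨cf, hcf, hxe⟩ := hx
          refine ⟨fun i => c * cf i, fun i => mul_nonneg hcpos.le (hcf i), ?_⟩
          show euclEquiv E (c • x) = _
          rw [map_smul, hxe, Finset.smul_sum]
          exact Finset.sum_congr rfl fun i _ => (smul_smul c (cf i) (g i))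
        add_mem' := by
          rintro x hx y hy
          obtain ⟨cx, hcx, hxe⟩ := hx
          obtain ⟨cy, hcy, hye⟩ := hy
          refine ⟨fun i => cx i + cy i, fun i => add_nonneg (hcx i) (hcy i), ?_⟩
          show euclEquiv E (x + y) = _
          rw [map_add, hxe, hye, ← Finset.sum_add_distrib]
          exact Finset.sum_congr rfl fun i _ => (add_smul (cx i) (cy i) (g i)).symm } with hK
    have h0K : (0 : EuclideanSpace ℝ E) ∈ K := by
      show euclEquiv E 0 ∈ S
      rw [map_zero]
      exact ⟨0, fun i => le_refl 0, by simp⟩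
    have hKclosed : IsClosed (K : Set (EuclideanSpace ℝ E)) :=
      hSclosed.preimage (euclEquiv E).continuous
    have hbnot : (euclEquiv E).symm h ∉ K := by
      show ¬ euclEquiv E ((euclEquiv E).symm h) ∈ S
      rw [(euclEquiv E).apply_symm_apply]
      exact hhS
    let P : ProperCone ℝ (EuclideanSpace ℝ E) :=
      { carrier := (K : Set (EuclideanSpace ℝ E))
        add_mem' := fun ha hb => K.add_mem ha hb
        zero_mem' := h0K
        smul_mem' := by
          rintro ⟨c, hc⟩ x hx
          show c • x ∈ K
          rcases hc.eq_or_lt with h0 | hpos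
          · rw [← h0, zero_smul]; exact h0K
          · exact K.smul_mem hpos hx
        isClosed' := hKclosed }
    obtain ⟨y, hy1, hy2⟩ :=
      ProperCone.hyperplane_separation' P (show (euclEquiv E).symm h ∉ P from hbnot)
    set Y : E → ℝ := euclEquiv E y with hY
    have hgenS : ∀ i, g i ∈ S := by
      intro i
      refine ⟨fun j => if j = i then 1 else 0, fun j => by positivity, ?_⟩
      have hite : ∀ j, (if j = i then (1:ℝ) else 0) • g j = if j = i then g j else 0 := by
        intro j; split <;> simp
      rw [Finset.sum_congr rfl (fun j _ => hite j)]
      simp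
    have hdotY : ∀ i, 0 ≤ dot (g i) Y := by
      intro i
      have hmem : (euclEquiv E).symm (g i) ∈ K := by
        show euclEquiv E ((euclEquiv E).symm (g i)) ∈ S
        rw [(euclEquiv E).apply_symm_apply]
        exact hgenS i
      have := hy1 _ hmem
      rwa [inner_eq_dot, (euclEquiv E).apply_symm_apply] at this
    have hsign : ∀ e, 0 ≤ α e * Y e := by
      intro e
      have := hdotY (Sum.inl e)
      simp only [hg, Sum.elim_inl] at this
      have heq : dot (α e • (Pi.single e (1:ℝ) : E → ℝ)) Y = α e * Y e := by
        simp [dot, Pi.single_apply, Finset.sum_ite_eq, mul_assoc]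
      rwa [heq] at this
    have hbY : ∀ i, dot ((b i : E → ℝ)) Y = 0 := by
      intro i
      have h1 := hdotY (Sum.inr (Sum.inl i))
      have h2 := hdotY (Sum.inr (Sum.inr i))
      simp only [hg, Sum.elim_inr, Sum.elim_inl] at h1 h2
      have hneg : dot (-(b i : E → ℝ)) Y = -dot ((b i : E → ℝ)) Y := by
        rw [dot_comm, dot_neg_right, dot_comm]
      rw [hneg] at h2
      linarith
    have hYperp : ∀ w ∈ perp W, dot w Y = 0 := by
      intro w hw
      rw [← hbasis w ((hWpmem w).mpr hw), dot_comm, dot_sum_right]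
      apply Finset.sum_eq_zero
      intro i _
      rw [dot_smul_right, dot_comm, hbY i, mul_zero]
    have hYW : Y ∈ W := mem_of_dot_perp_eq_zero W Y hYperp
    have hdotYh : dot Y h < 0 := by
      have := hy2
      rwa [inner_eq_dot, (euclEquiv E).apply_symm_apply] at this
    have hYne : Y ≠ 0 := by
      intro h0
      rw [h0] at hdotYh
      simp [dot] at hdotYh
    have := hstrict Y hYW hYne hsign
    rw [dot_comm] at this
    linarith
end

section
/- (The set of feasible chambers depends only on the Kähler chamber of the parameter.) Let W ⊆ ℝ^E be a linear subspace. If h₀ and h₁ belong to the same connected component of the set { h ∈ ℝ^E : ⟨h, γ⟩ ≠ 0 for every circuit γ of W } (the complement of the root hyperplanes γᗮ), then for every sign vector α : E → {+1,−1}, α is h₀-feasible if and only if α is h₁-feasible. -/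
namespace KahlerAux

open Finset

variable {E : Type*} [Fintype E]

lemma dot_comm (x y : E → ℝ) : dot x y = dot y x := by
  simp only [dot, mul_comm]

lemma dot_neg_left (x y : E → ℝ) : dot (-x) y = - dot x y := by
  simp [dot, neg_mul, Finset.sum_neg_distrib]

lemma dot_sub_right (x y z : E → ℝ) : dot x (y - z) = dot x y - dot x z := by
  simp [dot, mul_sub, Finset.sum_sub_distrib]

lemma dot_smul_right (c : ℝ) (x y : E → ℝ) : dot x (c • y) = c * dot x y := by
  simp only [dot, Pi.smul_apply, smul_eq_mul, Finset.mul_sum]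
  exact Finset.sum_congr rfl fun i _ => by ring

/-- `u` is conformal to `w`: every coordinate of `u` is zero or has the sign of `w`. -/
def Conf (u w : E → ℝ) : Prop := ∀ e, u e = 0 ∨ 0 < u e * w e

omit [Fintype E] in
lemma conf_self (w : E → ℝ) : Conf w w := by
  intro e
  rcases eq_or_ne (w e) 0 with h | h
  · exact Or.inl h
  · refine Or.inr ?_
    rcases h.lt_or_gt with h' | h'
    · exact mul_pos_of_neg_of_neg h' h'
    · exact mul_pos h' h'

omit [Fintype E] in
lemma conf_supp {u w : E → ℝ} (h : Conf u w) {e : E} (he : w e = 0) : u e = 0 := by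
  rcases h e with h' | h'
  · exact h'
  · rw [he, mul_zero] at h'; exact absurd h' (lt_irrefl 0)

omit [Fintype E] in
lemma conf_trans {u' u w : E → ℝ} (h1 : Conf u' u) (h2 : Conf u w) : Conf u' w := by
  intro e
  rcases h1 e with h | h
  · exact Or.inl h
  · rcases h2 e with h' | h'
    · rw [h', mul_zero] at h; exact absurd h (lt_irrefl 0)
    · refine Or.inr ?_
      have hu : u e ≠ 0 := fun hz => by rw [hz, mul_zero] at h; exact absurd h (lt_irrefl 0)
      have key : 0 < (u' e * w e) * (u e * u e) := by
        have : (u' e * w e) * (u e * u e) = (u' e * u e) * (u e * w e) := by ring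
        rw [this]; exact mul_pos h h'
      have hsq : 0 < u e * u e := by
        rcases hu.lt_or_gt with h' | h'
        · exact mul_pos_of_neg_of_neg h' h'
        · exact mul_pos h' h'
      by_contra hc
      push_neg at hc
      nlinarith

lemma core_sub (w y : E → ℝ) (hsupp : ∀ e, w e = 0 → y e = 0)
    (hex : ∃ e, 0 < y e * w e) :
    ∃ t : ℝ, 0 < t ∧ Conf (w - t • y) w ∧ ∃ e₀, w e₀ ≠ 0 ∧ (w - t • y) e₀ = 0 := by
  classical
  set T : Finset E := Finset.univ.filter (fun e => 0 < y e * w e) with hT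
  obtain ⟨e₁, he₁⟩ := hex
  have hne : T.Nonempty := ⟨e₁, by simp [hT, he₁]⟩
  have hratio : ∀ e ∈ T, 0 < w e / y e := by
    intro e he
    have h1 : 0 < y e * w e := by simpa [hT] using he
    rcases mul_pos_iff.mp h1 with ⟨h2, h3⟩ | ⟨h2, h3⟩
    · exact div_pos h3 h2
    · exact div_pos_of_neg_of_neg h3 h2
  set t : ℝ := T.inf' hne (fun e => w e / y e) with htdef
  have ht : 0 < t := by
    rw [htdef, Finset.lt_inf'_iff]
    exact hratio
  obtain ⟨e₀, he₀T, he₀⟩ := Finset.exists_mem_eq_inf' hne (fun e => w e / y e)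
  have hy₀ : y e₀ ≠ 0 := by
    intro hz
    have : 0 < y e₀ * w e₀ := by simpa [hT] using he₀T
    rw [hz, zero_mul] at this; exact lt_irrefl 0 this
  have hw₀ : w e₀ ≠ 0 := by
    intro hz
    exact hy₀ (hsupp e₀ hz)
  have hkill : (w - t • y) e₀ = 0 := by
    simp only [Pi.sub_apply, Pi.smul_apply, smul_eq_mul]
    rw [show t = w e₀ / y e₀ from htdef.trans he₀, div_mul_cancel₀ _ hy₀, sub_self]
  refine ⟨t, ht, ?_, e₀, hw₀, hkill⟩
  intro e
  by_cases hy : y e = 0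
  · simp only [Pi.sub_apply, Pi.smul_apply, smul_eq_mul, hy, mul_zero, sub_zero]
    rcases eq_or_ne (w e) 0 with h | h
    · exact Or.inl h
    · refine Or.inr ?_
      rcases h.lt_or_gt with h' | h'
      · exact mul_pos_of_neg_of_neg h' h'
      · exact mul_pos h' h'
  · have hw : w e ≠ 0 := fun hz => hy (hsupp e hz)
    have hnn : 0 ≤ (w - t • y) e * w e := by
      simp only [Pi.sub_apply, Pi.smul_apply, smul_eq_mul]
      by_cases heT : e ∈ T
      · have hle : t ≤ w e / y e := by
          rw [htdef]; exact Finset.inf'_le _ heT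
        have hpos : 0 < y e * w e := by simpa [hT] using heT
        have hkey : t * (y e * w e) ≤ (w e / y e) * (y e * w e) :=
          mul_le_mul_of_nonneg_right hle (le_of_lt hpos)
        have heq : (w e / y e) * (y e * w e) = w e * w e := by
          field_simp
        nlinarith
      · have hnp : y e * w e ≤ 0 := by
          by_contra hc
          push_neg at hc
          exact heT (by simp [hT, hc])
        nlinarith [mul_self_nonneg (w e), mul_nonneg (le_of_lt ht) (neg_nonneg.mpr hnp)]
    rcases eq_or_ne ((w - t • y) e) 0 with h | h
    · exact Or.inl h
    · exact Or.inr (lt_of_le_of_ne hnn (Ne.symm (mul_ne_zero h hw)))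

omit [Fintype E] in
lemma supp_smul {c : ℝ} (hc : c ≠ 0) (z : E → ℝ) :
    {e | (c • z) e ≠ 0} = {e | z e ≠ 0} := by
  ext e
  simp [mul_ne_zero_iff, hc]

lemma exists_conformal_circuit (W : Submodule ℝ (E → ℝ)) :
    ∀ n (w : E → ℝ), ({e | w e ≠ 0}).ncard ≤ n → w ∈ W → w ≠ 0 →
    ∃ γ, IsCircuit (W : Set (E → ℝ)) γ ∧ Conf γ w := by
  intro n
  induction n with
  | zero =>
    intro w hcard hw hw0
    exfalso
    have : {e | w e ≠ 0} = ∅ := by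
      rw [← Set.ncard_eq_zero (Set.toFinite _)]
      omega
    apply hw0
    funext e
    show w e = 0
    exact not_not.mp (Set.eq_empty_iff_forall_notMem.mp this e)
  | succ n ih =>
    intro w hcard hw hw0
    by_cases hcirc : IsCircuit (W : Set (E → ℝ)) w
    · exact ⟨w, hcirc, conf_self w⟩
    · have h3 : ¬ ∀ z ∈ (W : Set (E → ℝ)), z ≠ 0 → {e | z e ≠ 0} ⊆ {e | w e ≠ 0} →
          {e | z e ≠ 0} = {e | w e ≠ 0} := fun hall => hcirc ⟨hw, hw0, hall⟩
      push_neg at h3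
      obtain ⟨z, hzW, hz0, hzsub, hzne⟩ := h3
      obtain ⟨e₁, he₁⟩ : ∃ e, z e ≠ 0 := by
        by_contra hc
        push_neg at hc
        exact hz0 (funext hc)
      have hwe₁ : w e₁ ≠ 0 := hzsub he₁
      set s : ℝ := if 0 < z e₁ * w e₁ then 1 else -1 with hs
      have hs0 : s ≠ 0 := by
        rw [hs]; split <;> norm_num
      set y : E → ℝ := s • z with hy
      have hex : 0 < y e₁ * w e₁ := by
        rw [hy]
        simp only [Pi.smul_apply, smul_eq_mul]
        rw [hs]
        split
        · simpa using ‹0 < z e₁ * w e₁›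
        · have hne : z e₁ * w e₁ ≠ 0 := mul_ne_zero he₁ hwe₁
          have : z e₁ * w e₁ < 0 := lt_of_le_of_ne (not_lt.mp ‹¬ 0 < z e₁ * w e₁›) hne
          nlinarith
      have hsupp : ∀ e, w e = 0 → y e = 0 := by
        intro e hwe
        have : z e = 0 := by
          by_contra hc
          exact (hzsub hc) hwe
        simp [hy, this]
      obtain ⟨t, ht, hconf, e₀, hwe₀, hkill⟩ := core_sub w y hsupp ⟨e₁, hex⟩
      set w' : E → ℝ := w - t • y with hw'
      have hw'W : w' ∈ W := by
        exact Submodule.sub_mem W hw (Submodule.smul_mem W t (Submodule.smul_mem W s hzW))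
      have hsub : {e | w' e ≠ 0} ⊆ {e | w e ≠ 0} := by
        intro e he
        simp only [Set.mem_setOf_eq] at he ⊢
        intro hc
        exact he (conf_supp hconf hc)
      have hss : {e | w' e ≠ 0} ⊂ {e | w e ≠ 0} := by
        refine ⟨hsub, fun hc => ?_⟩
        have : e₀ ∈ {e | w' e ≠ 0} := hc (by simpa using hwe₀)
        simp only [Set.mem_setOf_eq] at this
        exact this hkill
      have hcard' : ({e | w' e ≠ 0}).ncard ≤ n := by
        have := Set.ncard_lt_ncard hss (Set.toFinite _)
        omega
      have hw'0 : w' ≠ 0 := by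
        intro hc
        apply hzne
        have hw_eq : w = (t * s) • z := by
          have : w - t • y = 0 := hc
          have h2 : w = t • y := by
            have := sub_eq_zero.mp this
            exact this
          rw [h2, hy, smul_smul]
        refine hzsub.antisymm ?_
        rw [hw_eq, supp_smul (mul_ne_zero (ne_of_gt ht) hs0)]
      obtain ⟨γ, hγ, hγc⟩ := ih w' hcard' hw'W hw'0
      exact ⟨γ, hγ, conf_trans hγc hconf⟩

lemma dec (W : Submodule ℝ (E → ℝ)) (h : E → ℝ) :
    ∀ n (w : E → ℝ), ({e | w e ≠ 0}).ncard ≤ n → w ∈ W →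
      (∀ γ, IsCircuit (W : Set (E → ℝ)) γ → Conf γ w → 0 < dot h γ) →
      w = 0 ∨ 0 < dot h w := by
  intro n
  induction n with
  | zero =>
    intro w hcard _ _
    left
    have hempty : {e | w e ≠ 0} = ∅ := by
      rw [← Set.ncard_eq_zero (Set.toFinite _)]; omega
    funext e
    show w e = 0
    exact not_not.mp (Set.eq_empty_iff_forall_notMem.mp hempty e)
  | succ n ih =>
    intro w hcard hw hcirc
    rcases eq_or_ne w 0 with hw0 | hw0
    · exact Or.inl hw0
    · obtain ⟨γ, hγ, hγc⟩ := exists_conformal_circuit W (n + 1) w hcard hw hw0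
      have hγpos : 0 < dot h γ := hcirc γ hγ hγc
      have hsupp : ∀ e, w e = 0 → γ e = 0 := fun e he => conf_supp hγc he
      have hex : ∃ e, 0 < γ e * w e := by
        obtain ⟨e, he⟩ : ∃ e, γ e ≠ 0 := by
          by_contra hc
          push_neg at hc
          exact hγ.2.1 (funext hc)
        rcases hγc e with h' | h'
        · exact absurd h' he
        · exact ⟨e, h'⟩
      obtain ⟨t, ht, hconf, e₀, hwe₀, hkill⟩ := core_sub w γ hsupp hex
      set w' : E → ℝ := w - t • γ with hw'
      have hw'W : w' ∈ W := Submodule.sub_mem W hw (Submodule.smul_mem W t hγ.1)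
      have hss : {e | w' e ≠ 0} ⊂ {e | w e ≠ 0} := by
        refine ⟨fun e he hc => he (conf_supp hconf hc), fun hc => ?_⟩
        exact (hc (show e₀ ∈ {e | w e ≠ 0} from hwe₀) : w' e₀ ≠ 0) hkill
      have hcard' : ({e | w' e ≠ 0}).ncard ≤ n := by
        have := Set.ncard_lt_ncard hss (Set.toFinite _)
        omega
      have hdot : dot h w = dot h w' + t * dot h γ := by
        rw [hw', dot_sub_right, dot_smul_right]; ring
      rcases ih w' hcard' hw'W (fun δ hδ hδc => hcirc δ hδ (conf_trans hδc hconf)) with h0 | hpos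
      · right
        rw [hdot, h0]
        have : dot h (0 : E → ℝ) = 0 := by simp [dot]
        rw [this, zero_add]
        exact mul_pos ht hγpos
      · right
        rw [hdot]
        have := mul_pos ht hγpos
        linarith

lemma dot_add_right (x y z : E → ℝ) : dot x (y + z) = dot x y + dot x z := by
  simp [dot, mul_add, Finset.sum_add_distrib]

lemma dot_zero_right (x : E → ℝ) : dot x (0 : E → ℝ) = 0 := by simp [dot]

lemma dot_zero_left (x : E → ℝ) : dot (0 : E → ℝ) x = 0 := by simp [dot]

/-- `perp W` as a submodule. -/
def perpSub (W : Submodule ℝ (E → ℝ)) : Submodule ℝ (E → ℝ) where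
  carrier := perp W
  add_mem' := by
    intro a b ha hb w hw
    rw [dot_add_right, ha w hw, hb w hw, add_zero]
  zero_mem' := by
    intro w hw
    exact dot_zero_right w
  smul_mem' := by
    intro c a ha w hw
    rw [dot_smul_right, ha w hw, mul_zero]

lemma mem_perpSub {W : Submodule ℝ (E → ℝ)} {u : E → ℝ} :
    u ∈ perpSub W ↔ u ∈ perp W := Iff.rfl

omit [Fintype E] in
lemma supp_neg (γ : E → ℝ) : {e | (-γ) e ≠ 0} = {e | γ e ≠ 0} := by
  ext e; simp

lemma circuit_neg {W : Submodule ℝ (E → ℝ)} {γ : E → ℝ}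
    (hγ : IsCircuit (W : Set (E → ℝ)) γ) : IsCircuit (W : Set (E → ℝ)) (-γ) := by
  obtain ⟨h1, h2, h3⟩ := hγ
  refine ⟨Submodule.neg_mem W h1, fun hc => h2 (by simpa using congrArg Neg.neg hc), ?_⟩
  intro w hw hw0 hsub
  rw [supp_neg] at *
  exact h3 w hw hw0 hsub

lemma circuit_prop {W : Submodule ℝ (E → ℝ)} {γ₀ γ : E → ℝ}
    (hγ₀ : IsCircuit (W : Set (E → ℝ)) γ₀) (hγ : IsCircuit (W : Set (E → ℝ)) γ)
    (hs : {e | γ e ≠ 0} = {e | γ₀ e ≠ 0}) : ∃ c : ℝ, c ≠ 0 ∧ γ = c • γ₀ := by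
  obtain ⟨e₀, he₀⟩ : ∃ e, γ₀ e ≠ 0 := by
    by_contra hc
    push_neg at hc
    exact hγ₀.2.1 (funext hc)
  have hγe₀ : γ e₀ ≠ 0 := by
    have : e₀ ∈ {e | γ₀ e ≠ 0} := he₀
    rw [← hs] at this
    exact this
  set c : ℝ := γ e₀ / γ₀ e₀ with hc
  have hc0 : c ≠ 0 := div_ne_zero hγe₀ he₀
  refine ⟨c, hc0, ?_⟩
  set d : E → ℝ := γ - c • γ₀ with hd
  have hdW : d ∈ W := Submodule.sub_mem W hγ.1 (Submodule.smul_mem W c hγ₀.1)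
  have hde₀ : d e₀ = 0 := by
    simp only [hd, Pi.sub_apply, Pi.smul_apply, smul_eq_mul, hc]
    rw [div_mul_cancel₀ _ he₀, sub_self]
  have hdsub : {e | d e ≠ 0} ⊆ {e | γ₀ e ≠ 0} := by
    intro e he
    simp only [Set.mem_setOf_eq, hd, Pi.sub_apply, Pi.smul_apply, smul_eq_mul] at he ⊢
    intro hz
    have hγe : γ e = 0 := by
      have : e ∉ {e | γ e ≠ 0} := by rw [hs]; simp [hz]
      simpa using this
    rw [hγe, hz, mul_zero, sub_zero] at he
    exact he rfl
  by_contra hne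
  have hd0 : d ≠ 0 := fun hz => hne (by rwa [hd, sub_eq_zero] at hz)
  have := hγ₀.2.2 d (SetLike.mem_coe.mpr hdW) hd0 hdsub
  have he₀mem : e₀ ∈ {e | d e ≠ 0} := by rw [this]; exact he₀
  exact he₀mem hde₀

omit [Fintype E] in
lemma sum_extension {ι : Type*} [Fintype ι] (I : Finset ι) (g : ι → E → ℝ) (t : ι → ℝ)
    (h0 : ∀ i ∉ I, t i = 0) : ∑ i : ↥I, t ↑i • g ↑i = ∑ i, t i • g i := by
  classical
  rw [Finset.sum_coe_sort I (fun i => t i • g i)]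
  exact Finset.sum_subset (Finset.subset_univ I) (fun i _ hi => by rw [h0 i hi, zero_smul])

lemma carath {ι : Type*} [Fintype ι] (g : ι → E → ℝ) :
    ∀ n (t : ι → ℝ), (Finset.univ.filter (fun i => t i ≠ 0)).card ≤ n → (∀ i, 0 ≤ t i) →
    ∃ (I : Finset ι) (s : ι → ℝ), LinearIndependent ℝ (fun i : ↥I => g ↑i) ∧
      (∀ i, 0 ≤ s i) ∧ (∀ i ∉ I, s i = 0) ∧ ∑ i, s i • g i = ∑ i, t i • g i := by
  classical
  intro n
  induction n with
  | zero =>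
    intro t hcard ht
    have ht0 : ∀ i, t i = 0 := by
      intro i
      by_contra hc
      have : i ∈ Finset.univ.filter (fun i => t i ≠ 0) := by simp [hc]
      have := Finset.card_pos.mpr ⟨i, this⟩
      omega
    refine ⟨∅, t, ?_, ht, fun i _ => ht0 i, rfl⟩
    have : IsEmpty ((∅ : Finset ι) : Type _) := by
      constructor; rintro ⟨i, hi⟩; simp at hi
    exact linearIndependent_empty_type
  | succ n ih =>
    intro t hcard ht
    set I : Finset ι := Finset.univ.filter (fun i => t i ≠ 0) with hI
    by_cases hLI : LinearIndependent ℝ (fun i : ↥I => g ↑i)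
    · exact ⟨I, t, hLI, ht, fun i hi => by simpa [hI] using hi, rfl⟩
    · obtain ⟨c, hcsum, i₁, hi₁⟩ := Fintype.not_linearIndependent_iff.mp hLI
      set c' : ι → ℝ := fun i => if h : i ∈ I then c ⟨i, h⟩ else 0 with hc'
      have hc'sum : ∑ i, c' i • g i = 0 := by
        rw [← sum_extension I g c' (fun i hi => by simp [hc', hi])]
        rw [← hcsum]
        apply Finset.sum_congr rfl
        intro i _
        simp [hc', i.2]
      have hc'i₁ : c' (↑i₁) ≠ 0 := by
        simp only [hc', i₁.2, dif_pos]
        simpa using hi₁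
      obtain ⟨d, hdsum, hdpos, hdI⟩ :
          ∃ d : ι → ℝ, (∑ i, d i • g i = 0) ∧ (∃ i, 0 < d i) ∧ (∀ i, d i ≠ 0 → i ∈ I) := by
        rcases hc'i₁.lt_or_gt with hneg | hpos
        · refine ⟨-c', by rw [← neg_zero, ← hc'sum]; simp [neg_smul, Finset.sum_neg_distrib], ⟨i₁, by simpa using hneg⟩, ?_⟩
          intro i hi
          by_contra hiI
          simp [hc', hiI] at hi
        · refine ⟨c', hc'sum, ⟨i₁, hpos⟩, ?_⟩
          intro i hi
          by_contra hiI
          simp [hc', hiI] at hi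
      set J : Finset ι := Finset.univ.filter (fun i => 0 < d i) with hJ
      obtain ⟨iw, hiw⟩ := hdpos
      have hJne : J.Nonempty := ⟨iw, by simp [hJ, hiw]⟩
      set lam : ℝ := J.inf' hJne (fun i => t i / d i) with hlam
      have hlam_nonneg : 0 ≤ lam := by
        rw [hlam, Finset.le_inf'_iff]
        intro i hi
        have hdi : 0 < d i := by simpa [hJ] using hi
        exact div_nonneg (ht i) (le_of_lt hdi)
      obtain ⟨i₀, hi₀J, hi₀⟩ := Finset.exists_mem_eq_inf' hJne (fun i => t i / d i)
      have hdi₀ : 0 < d i₀ := by simpa [hJ] using hi₀J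
      have hti₀ : t i₀ ≠ 0 := by
        have : i₀ ∈ I := hdI i₀ (ne_of_gt hdi₀)
        simpa [hI] using this
      set t' : ι → ℝ := fun i => t i - lam * d i with ht'
      have ht'ature : ∀ i, 0 ≤ t' i := by
        intro i
        by_cases hdi : 0 < d i
        · have hle : lam ≤ t i / d i := by
            rw [hlam]; exact Finset.inf'_le _ (by simp [hJ, hdi])
          have := (le_div_iff₀ hdi).mp hle
          simp only [ht']; linarith
        · push_neg at hdi
          have : 0 ≤ -(lam * d i) := by
            rw [neg_nonneg]
            exact mul_nonpos_of_nonneg_of_nonpos hlam_nonneg hdi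
          have := ht i
          simp only [ht']; linarith
      have ht'i₀ : t' i₀ = 0 := by
        simp only [ht']
        rw [show lam = t i₀ / d i₀ from hlam.trans hi₀, div_mul_cancel₀ _ (ne_of_gt hdi₀), sub_self]
      have hsub : Finset.univ.filter (fun i => t' i ≠ 0) ⊂ I := by
        rw [Finset.ssubset_iff_of_subset]
        · exact ⟨i₀, by simpa [hI] using hti₀, by simp [ht'i₀]⟩
        · intro i hi
          simp only [Finset.mem_filter, Finset.mem_univ, true_and] at hi
          by_contra hiI
          have ht0 : t i = 0 := by simpa [hI] using hiI
          have hd0 : d i = 0 := by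
            by_contra hd
            exact hiI (hdI i hd)
          simp [ht', ht0, hd0] at hi
      have hcard' : (Finset.univ.filter (fun i => t' i ≠ 0)).card ≤ n := by
        have h1 := Finset.card_lt_card hsub
        have h2 : I.card ≤ n + 1 := hcard
        omega
      have hsum' : ∑ i, t' i • g i = ∑ i, t i • g i := by
        simp only [ht', sub_smul, Finset.sum_sub_distrib]
        have : ∑ i, (lam * d i) • g i = lam • ∑ i, d i • g i := by
          rw [Finset.smul_sum]
          exact Finset.sum_congr rfl fun i _ => by rw [smul_smul]
        rw [this, hdsum, smul_zero, sub_zero]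
      obtain ⟨I', s, hLI', hs, hs0, hseq⟩ := ih t' hcard' ht'ature
      exact ⟨I', s, hLI', hs, hs0, hseq.trans hsum'⟩

lemma isClosed_cone {ι : Type*} [Fintype ι] (g : ι → E → ℝ) :
    IsClosed {x : E → ℝ | ∃ t : ι → ℝ, (∀ i, 0 ≤ t i) ∧ x = ∑ i, t i • g i} := by
  classical
  have hrep : {x : E → ℝ | ∃ t : ι → ℝ, (∀ i, 0 ≤ t i) ∧ x = ∑ i, t i • g i} =
      ⋃ (I : Finset ι), if LinearIndependent ℝ (fun i : ↥I => g ↑i) then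
        ((fun t : (↥I → ℝ) => ∑ i : ↥I, t i • g ↑i) '' {t | ∀ i, 0 ≤ t i}) else ∅ := by
    ext x
    simp only [Set.mem_setOf_eq, Set.mem_iUnion]
    constructor
    · rintro ⟨t, ht, rfl⟩
      obtain ⟨I, s, hLI, hs, hs0, hseq⟩ :=
        carath g (Finset.univ.filter (fun i => t i ≠ 0)).card t le_rfl ht
      refine ⟨I, ?_⟩
      rw [if_pos hLI]
      refine ⟨fun i => s ↑i, fun i => hs ↑i, ?_⟩
      show (∑ i : ↥I, s ↑i • g ↑i) = _
      rw [sum_extension I g s hs0, hseq]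
    · rintro ⟨I, hx⟩
      by_cases hLI : LinearIndependent ℝ (fun i : ↥I => g ↑i)
      · rw [if_pos hLI] at hx
        obtain ⟨t, ht, rfl⟩ := hx
        set t' : ι → ℝ := fun i => if h : i ∈ I then t ⟨i, h⟩ else 0 with ht'
        refine ⟨t', ?_, ?_⟩
        · intro i
          by_cases h : i ∈ I
          · simpa [ht', h] using ht ⟨i, h⟩
          · simp [ht', h]
        · rw [← sum_extension I g t' (fun i hi => by simp [ht', hi])]
          exact (Finset.sum_congr rfl fun i _ => by simp [ht', i.2]).symm
      · rw [if_neg hLI] at hx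
        exact absurd hx (Set.notMem_empty x)
  rw [hrep]
  apply isClosed_iUnion_of_finite
  intro I
  split_ifs with hLI
  · set f : (↥I → ℝ) →ₗ[ℝ] (E → ℝ) := Fintype.linearCombination ℝ (fun i : ↥I => g ↑i) with hf
    have hker : LinearMap.ker f = ⊥ := by
      rw [LinearMap.ker_eq_bot']
      intro m hm
      have := Fintype.linearIndependent_iff.mp hLI m (by
        rw [hf] at hm
        simpa [Fintype.linearCombination_apply] using hm)
      funext i
      exact this i
    have hemb := LinearMap.isClosedEmbedding_of_injective hker
    have himg : (fun t : (↥I → ℝ) => ∑ i : ↥I, t i • g ↑i) '' {t | ∀ i, 0 ≤ t i} =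
        f '' {t | ∀ i, 0 ≤ t i} := by
      apply Set.image_congr
      intro t _
      rw [hf]
      simp [Fintype.linearCombination_apply]
    rw [himg]
    apply hemb.isClosedMap
    have : {t : ↥I → ℝ | ∀ i, 0 ≤ t i} = ⋂ i, {t : ↥I → ℝ | 0 ≤ t i} := by
      ext t; simp [Set.mem_iInter]
    rw [this]
    exact isClosed_iInter fun i => isClosed_le continuous_const (continuous_apply i)
  · exact isClosed_empty

lemma sum_single [DecidableEq E] (α : E → ℝ) (hα : ∀ e, α e = 1 ∨ α e = -1) (v : E → ℝ) :
    ∑ e, (α e * v e) • (α e • (Pi.single e 1 : E → ℝ)) = v := by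
  have h1 : ∀ e, (α e * v e) • (α e • (Pi.single e 1 : E → ℝ)) = Pi.single e (v e) := by
    intro e
    have hαe : α e * α e = 1 := by rcases hα e with h | h <;> rw [h] <;> norm_num
    rw [smul_smul, show (α e * v e) * α e = (α e * α e) * v e by ring, hαe, one_mul]
    rw [← Pi.single_smul, smul_eq_mul, mul_one]
  simp_rw [h1]
  exact Finset.univ_sum_single v

lemma isClosed_feasible (W : Submodule ℝ (E → ℝ)) (α : E → ℝ)
    (hα : ∀ e, α e = 1 ∨ α e = -1) : IsClosed {h : E → ℝ | IsFeasible W h α} := by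
  classical
  obtain ⟨S, hS⟩ : ∃ S : Finset (E → ℝ), Submodule.span ℝ (↑S) = perpSub W :=
    IsNoetherian.noetherian (perpSub W)
  set g : E ⊕ (↥S × Bool) → E → ℝ := Sum.elim (fun e => α e • (Pi.single e 1 : E → ℝ))
    (fun p => if p.2 then (p.1 : E → ℝ) else -(p.1 : E → ℝ)) with hg
  have hset : {h : E → ℝ | IsFeasible W h α} =
      {x : E → ℝ | ∃ t : E ⊕ (↥S × Bool) → ℝ, (∀ i, 0 ≤ t i) ∧ x = ∑ i, t i • g i} := by
    ext x
    simp only [Set.mem_setOf_eq]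
    constructor
    · rintro ⟨v, hvp, hva⟩
      have hxv : x - v ∈ Submodule.span ℝ (↑S : Set (E → ℝ)) := by
        rw [hS, mem_perpSub]
        intro w hw
        have h := hvp w hw
        have h2 : dot w (x - v) = -1 * dot w (v - x) := by
          rw [← dot_smul_right]
          congr 1
          funext e
          simp
        rw [h2, h, mul_zero]
      obtain ⟨f, -, hf⟩ := Submodule.mem_span_finset.mp hxv
      refine ⟨Sum.elim (fun e => α e * v e)
        (fun p => if p.2 then max (f ↑p.1) 0 else max (-(f ↑p.1)) 0), ?_, ?_⟩
      · rintro (e | ⟨s, b⟩)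
        · exact hva e
        · cases b <;> simp [le_max_iff]
      · have h1 : ∑ e, (α e * v e) • g (Sum.inl e) = v := by
          simp only [hg, Sum.elim_inl]
          exact sum_single α hα v
        have h2 : ∑ p : ↥S × Bool,
            (if p.2 then max (f ↑p.1) 0 else max (-(f ↑p.1)) 0) • g (Sum.inr p) = x - v := by
          rw [Fintype.sum_prod_type]
          have h3 : ∀ s : ↥S, (∑ b : Bool,
              (if b then max (f ↑s) 0 else max (-(f ↑s)) 0) • g (Sum.inr (s, b)))
              = f ↑s • (s : E → ℝ) := by
            intro s
            rw [Fintype.sum_bool]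
            simp only [hg, Sum.elim_inr, reduceIte, Bool.false_eq_true, if_false]
            rw [smul_neg, ← sub_eq_add_neg, ← sub_smul]
            congr 1
            rcases le_total 0 (f ↑s) with h | h
            · rw [max_eq_left h, max_eq_right (by linarith)]; ring
            · rw [max_eq_right h, max_eq_left (by linarith)]; ring
          rw [Finset.sum_congr rfl (fun s _ => h3 s)]
          rw [Finset.sum_coe_sort S (fun s => f s • s)]
          exact hf
        rw [Fintype.sum_sum_type]
        simp only [Sum.elim_inl, Sum.elim_inr]
        rw [h1, h2]
        abel
    · rintro ⟨t, ht, rfl⟩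
      set v : E → ℝ := fun e => α e * t (Sum.inl e) with hv
      have hveq : ∑ e, t (Sum.inl e) • g (Sum.inl e) = v := by
        funext e
        rw [Finset.sum_apply]
        rw [Finset.sum_eq_single e]
        · simp only [hg, Sum.elim_inl, Pi.smul_apply, smul_eq_mul, Pi.single_eq_same, hv]
          ring
        · intro e' _ hne
          simp only [hg, Sum.elim_inl, Pi.smul_apply, smul_eq_mul]
          rw [Pi.single_eq_of_ne (Ne.symm hne)]
          simp
        · intro h; exact absurd (Finset.mem_univ e) h
      set u : E → ℝ := ∑ p : ↥S × Bool, t (Sum.inr p) • g (Sum.inr p) with hu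
      have huP : u ∈ perpSub W := by
        rw [← hS]
        apply Submodule.sum_mem
        intro p _
        apply Submodule.smul_mem
        simp only [hg, Sum.elim_inr]
        by_cases hb : p.2
        · rw [if_pos hb]; exact Submodule.subset_span p.1.2
        · rw [if_neg hb]; exact Submodule.neg_mem _ (Submodule.subset_span p.1.2)
      refine ⟨v, ?_, ?_⟩
      · have hsplit : ∑ i, t i • g i = v + u := by
          rw [Fintype.sum_sum_type, hveq, hu]
        rw [hsplit, show v - (v + u) = -u by abel]
        exact (perpSub W).neg_mem huP
      · intro e
        have hαe : α e * α e = 1 := by rcases hα e with h | h <;> rw [h] <;> norm_num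
        show 0 ≤ α e * (α e * t (Sum.inl e))
        rw [← mul_assoc, hαe, one_mul]
        exact ht (Sum.inl e)
  rw [hset]
  exact isClosed_cone g

lemma mem_of_dot_perp (W : Submodule ℝ (E → ℝ)) {w : E → ℝ}
    (hw : ∀ u ∈ perp W, dot u w = 0) : w ∈ W := by
  classical
  set L : EuclideanSpace ℝ E ≃ₗ[ℝ] (E → ℝ) := WithLp.linearEquiv 2 ℝ (E → ℝ) with hL
  set W' : Submodule ℝ (EuclideanSpace ℝ E) := W.comap (L : EuclideanSpace ℝ E →ₗ[ℝ] (E → ℝ))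
    with hW'
  have hinner : ∀ x y : EuclideanSpace ℝ E, (inner ℝ x y : ℝ) = dot (L x) (L y) := by
    intro x y
    rw [PiLp.inner_apply, dot]
    apply Finset.sum_congr rfl
    intro e _
    simp [RCLike.inner_apply]
    exact mul_comm _ _
  have key : L.symm w ∈ W'ᗮᗮ := by
    rw [Submodule.mem_orthogonal]
    intro u hu
    have hLu : L u ∈ perp W := by
      intro z hz
      have hz' : L.symm z ∈ W' := by
        rw [hW', Submodule.mem_comap]
        simpa using hz
      have h0 := hu (L.symm z) hz'
      rw [hinner] at h0
      simpa using h0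
    have := hw (L u) hLu
    rw [hinner]
    simpa using this
  rw [Submodule.orthogonal_orthogonal] at key
  rw [hW', Submodule.mem_comap] at key
  simpa using key

lemma feasible_smul {W : Submodule ℝ (E → ℝ)} {α x : E → ℝ} {s : ℝ}
    (hx : IsFeasible W x α) (hs : 0 ≤ s) : IsFeasible W (s • x) α := by
  obtain ⟨v, hv, hva⟩ := hx
  refine ⟨s • v, ?_, ?_⟩
  · have : s • v - s • x = s • (v - x) := by rw [smul_sub]
    rw [this]
    exact (perpSub W).smul_mem s hv
  · intro e
    simp only [Pi.smul_apply, smul_eq_mul]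
    have := hva e
    nlinarith

lemma perp_mem_feasible {W : Submodule ℝ (E → ℝ)} {α u : E → ℝ} (hu : u ∈ perp W) :
    IsFeasible W u α := by
  refine ⟨0, ?_, fun e => by simp⟩
  have : (0 : E → ℝ) - u = -u := by funext e; simp
  rw [this]
  exact (perpSub W).neg_mem hu

lemma reverse_farkas (W : Submodule ℝ (E → ℝ)) (α h : E → ℝ)
    (hα : ∀ e, α e = 1 ∨ α e = -1) (hnf : ¬ IsFeasible W h α) :
    ∃ w, w ∈ W ∧ (∀ e, α e * w e ≤ 0) ∧ 0 < dot h w := by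
  classical
  set C := {h' : E → ℝ | IsFeasible W h' α} with hC
  have hCc : IsClosed C := isClosed_feasible W α hα
  have hconv : Convex ℝ C := by
    intro x hx y hy a b ha hb hab
    obtain ⟨vx, hvx, hax⟩ := hx
    obtain ⟨vy, hvy, hay⟩ := hy
    refine ⟨a • vx + b • vy, ?_, ?_⟩
    · have heq : a • vx + b • vy - (a • x + b • y) = a • (vx - x) + b • (vy - y) := by
        funext e; simp; ring
      rw [heq]
      exact (perpSub W).add_mem ((perpSub W).smul_mem a hvx) ((perpSub W).smul_mem b hvy)
    · intro e
      simp only [Pi.add_apply, Pi.smul_apply, smul_eq_mul]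
      have h1 := hax e
      have h2 := hay e
      nlinarith
  obtain ⟨f, u, hfC, hfh⟩ := geometric_hahn_banach_closed_point hconv hCc hnf
  have h0C : (0 : E → ℝ) ∈ C := ⟨0, by rw [sub_zero]; exact (perpSub W).zero_mem, fun e => by simp⟩
  have hu0 : 0 < u := by
    have := hfC 0 h0C
    simpa using this
  have hfnonpos : ∀ a ∈ C, f a ≤ 0 := by
    intro a ha
    by_contra hc
    push_neg at hc
    have hs : 0 ≤ (u + 1) / f a := div_nonneg (by linarith) (le_of_lt hc)
    have hsa : ((u + 1) / f a) • a ∈ C := feasible_smul ha hs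
    have hlt := hfC _ hsa
    rw [map_smul, smul_eq_mul, div_mul_cancel₀ _ (ne_of_gt hc)] at hlt
    linarith
  set w : E → ℝ := fun e => f (Pi.single e 1) with hwdef
  have hrep : ∀ x : E → ℝ, f x = dot x w := by
    intro x
    have hx : x = ∑ e, x e • (Pi.single e 1 : E → ℝ) := by
      funext j
      rw [Finset.sum_apply]
      rw [Finset.sum_eq_single j]
      · simp
      · intro e' _ hne
        simp only [Pi.smul_apply, smul_eq_mul]
        rw [Pi.single_eq_of_ne (Ne.symm hne)]
        simp
      · intro hj; exact absurd (Finset.mem_univ j) hj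
    conv_lhs => rw [hx]
    rw [map_sum]
    rw [dot]
    apply Finset.sum_congr rfl
    intro e _
    rw [map_smul, smul_eq_mul, hwdef]
  have hwW : w ∈ W := by
    apply mem_of_dot_perp
    intro u' hu'
    have h1 : f u' ≤ 0 := hfnonpos u' (perp_mem_feasible hu')
    have h2 : f (-u') ≤ 0 := hfnonpos (-u') (perp_mem_feasible ((perpSub W).neg_mem hu'))
    rw [map_neg] at h2
    have : f u' = 0 := le_antisymm h1 (by linarith)
    rw [← hrep]
    exact this
  refine ⟨w, hwW, ?_, ?_⟩
  · intro e
    have haC : (α e • (Pi.single e 1 : E → ℝ)) ∈ C := by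
      refine ⟨α e • (Pi.single e 1 : E → ℝ), by rw [sub_self]; exact (perpSub W).zero_mem, ?_⟩
      intro e'
      by_cases he : e' = e
      · subst he
        simp only [Pi.smul_apply, smul_eq_mul, Pi.single_eq_same, mul_one]
        exact mul_self_nonneg _
      · simp [Pi.single_eq_of_ne he]
    have := hfnonpos _ haC
    rw [map_smul, smul_eq_mul] at this
    exact this
  · have := hrep h
    rw [← this]
    linarith

lemma feasible_dot_nonpos {W : Submodule ℝ (E → ℝ)} {α h : E → ℝ}
    (hα : ∀ e, α e = 1 ∨ α e = -1) (hf : IsFeasible W h α) {γ : E → ℝ}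
    (hγ : IsCircuit (W : Set (E → ℝ)) γ) (hαγ : ∀ e, α e * γ e ≤ 0) : dot h γ ≤ 0 := by
  obtain ⟨v, hv, hva⟩ := hf
  have h1 : dot γ (v - h) = 0 := hv γ hγ.1
  rw [dot_sub_right] at h1
  have h2 : dot γ v ≤ 0 := by
    rw [dot]
    apply Finset.sum_nonpos
    intro e _
    have hαe : α e * α e = 1 := by rcases hα e with h' | h' <;> rw [h'] <;> norm_num
    have key : γ e * v e = (α e * γ e) * (α e * v e) := by
      rw [show (α e * γ e) * (α e * v e) = (α e * α e) * (γ e * v e) by ring, hαe, one_mul]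
    rw [key]
    exact mul_nonpos_of_nonpos_of_nonneg (hαγ e) (hva e)
  rw [dot_comm]
  linarith

lemma feasible_of_sign (W : Submodule ℝ (E → ℝ)) (α h : E → ℝ)
    (hα : ∀ e, α e = 1 ∨ α e = -1)
    (hP : ∀ γ, IsCircuit (W : Set (E → ℝ)) γ → (∀ e, α e * γ e ≤ 0) → dot h γ < 0) :
    IsFeasible W h α := by
  by_contra hnf
  obtain ⟨w, hwW, hαw, hdot⟩ := reverse_farkas W α h hα hnf
  have hconf : ∀ γ, IsCircuit (W : Set (E → ℝ)) γ → Conf γ w → (∀ e, α e * γ e ≤ 0) := by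
    intro γ hγ hγc e
    rcases hγc e with h0 | hpos
    · rw [h0, mul_zero]
    · have hwe : w e ≠ 0 := fun hz => by rw [hz, mul_zero] at hpos; exact lt_irrefl 0 hpos
      have hγe : γ e ≠ 0 := fun hz => by rw [hz, zero_mul] at hpos; exact lt_irrefl 0 hpos
      have hαe : α e ≠ 0 := by rcases hα e with h' | h' <;> rw [h'] <;> norm_num
      have h1 : α e * w e < 0 := lt_of_le_of_ne (hαw e) (mul_ne_zero hαe hwe)
      by_contra hcc
      push_neg at hcc
      have hq1 : 0 < (α e * γ e) * (γ e * w e) := mul_pos hcc hpos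
      have hq2 : (α e * w e) * (γ e * γ e) < 0 :=
        mul_neg_of_neg_of_pos h1 (mul_self_pos.mpr hγe)
      nlinarith
  have hneg : ∀ γ, IsCircuit (W : Set (E → ℝ)) γ → Conf γ w → 0 < dot (-h) γ := by
    intro γ hγ hγc
    rw [dot_neg_left]
    have := hP γ hγ (hconf γ hγ hγc)
    linarith
  rcases dec W (-h) ({e | w e ≠ 0}.ncard) w le_rfl hwW hneg with h0 | hp
  · rw [h0] at hdot
    rw [dot_zero_right] at hdot
    exact lt_irrefl 0 hdot
  · rw [dot_neg_left] at hp
    linarith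

lemma continuous_dot (γ : E → ℝ) : Continuous fun h : E → ℝ => dot h γ := by
  simp only [dot]
  exact continuous_finset_sum _ fun e _ => (continuous_apply e).mul continuous_const

omit [Fintype E] in
lemma isOpen_imp {P : Prop} {Q : (E → ℝ) → Prop} [TopologicalSpace (E → ℝ)]
    (hQ : IsOpen {h : E → ℝ | Q h}) : IsOpen {h : E → ℝ | P → Q h} := by
  by_cases hP : P
  · convert hQ using 1
    ext h; simp [hP]
  · convert isOpen_univ using 1
    ext h; simp [hP]

lemma isOpen_T (W : Submodule ℝ (E → ℝ)) (α : E → ℝ) :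
    IsOpen {h : E → ℝ | ∃ γ, IsCircuit (W : Set (E → ℝ)) γ ∧ (∀ e, α e * γ e ≤ 0) ∧
      0 < dot h γ} := by
  have hrep : {h : E → ℝ | ∃ γ, IsCircuit (W : Set (E → ℝ)) γ ∧ (∀ e, α e * γ e ≤ 0) ∧
      0 < dot h γ} = ⋃ γ : E → ℝ, {h | (IsCircuit (W : Set (E → ℝ)) γ ∧ (∀ e, α e * γ e ≤ 0)) ∧
      0 < dot h γ} := by
    ext h
    simp only [Set.mem_setOf_eq, Set.mem_iUnion]
    constructor
    · rintro ⟨γ, h1, h2, h3⟩; exact ⟨γ, ⟨h1, h2⟩, h3⟩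
    · rintro ⟨γ, ⟨h1, h2⟩, h3⟩; exact ⟨γ, h1, h2, h3⟩
  rw [hrep]
  apply isOpen_iUnion
  intro γ
  by_cases hγ : IsCircuit (W : Set (E → ℝ)) γ ∧ (∀ e, α e * γ e ≤ 0)
  · have : {h : E → ℝ | (IsCircuit (W : Set (E → ℝ)) γ ∧ (∀ e, α e * γ e ≤ 0)) ∧ 0 < dot h γ}
        = {h | 0 < dot h γ} := by
      ext h; simp [hγ]
    rw [this]
    exact isOpen_lt continuous_const (continuous_dot γ)
  · have : {h : E → ℝ | (IsCircuit (W : Set (E → ℝ)) γ ∧ (∀ e, α e * γ e ≤ 0)) ∧ 0 < dot h γ}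
        = ∅ := by
      ext h
      simp only [Set.mem_setOf_eq, Set.mem_empty_iff_false, iff_false]
      rintro ⟨h1, _⟩
      exact hγ h1
    rw [this]
    exact isOpen_empty

lemma isOpen_S (W : Submodule ℝ (E → ℝ)) (α : E → ℝ) (hα : ∀ e, α e = 1 ∨ α e = -1) :
    IsOpen {h : E → ℝ | ∀ γ, IsCircuit (W : Set (E → ℝ)) γ →
      dot h γ ≠ 0 ∧ ((∀ e, α e * γ e ≤ 0) → dot h γ < 0)} := by
  classical
  have hrep : {h : E → ℝ | ∀ γ, IsCircuit (W : Set (E → ℝ)) γ →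
      dot h γ ≠ 0 ∧ ((∀ e, α e * γ e ≤ 0) → dot h γ < 0)} =
      ⋂ s : Set E, {h : E → ℝ | ∀ γ, IsCircuit (W : Set (E → ℝ)) γ → {e | γ e ≠ 0} = s →
      dot h γ ≠ 0 ∧ ((∀ e, α e * γ e ≤ 0) → dot h γ < 0)} := by
    ext h
    simp only [Set.mem_setOf_eq, Set.mem_iInter]
    constructor
    · intro hh s γ hγ _
      exact hh γ hγ
    · intro hh γ hγ
      exact hh {e | γ e ≠ 0} γ hγ rfl
  rw [hrep]
  apply isOpen_iInter_of_finite
  intro s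
  by_cases hex : ∃ γ, IsCircuit (W : Set (E → ℝ)) γ ∧ {e | γ e ≠ 0} = s
  · obtain ⟨γ₀, hγ₀, hs₀⟩ := hex
    have hVeq : {h : E → ℝ | ∀ γ, IsCircuit (W : Set (E → ℝ)) γ → {e | γ e ≠ 0} = s →
        dot h γ ≠ 0 ∧ ((∀ e, α e * γ e ≤ 0) → dot h γ < 0)} =
        {h : E → ℝ | dot h γ₀ ≠ 0} ∩
        {h : E → ℝ | (∀ e, α e * γ₀ e ≤ 0) → dot h γ₀ < 0} ∩
        {h : E → ℝ | (∀ e, 0 ≤ α e * γ₀ e) → 0 < dot h γ₀} := by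
      ext h
      simp only [Set.mem_setOf_eq, Set.mem_inter_iff]
      constructor
      · intro hh
        have h1 := hh γ₀ hγ₀ hs₀
        refine ⟨⟨h1.1, h1.2⟩, ?_⟩
        intro hge
        have hneg := hh (-γ₀) (circuit_neg hγ₀) (by rw [supp_neg]; exact hs₀)
        have h2 : ∀ e, α e * (-γ₀) e ≤ 0 := by
          intro e
          simp only [Pi.neg_apply, mul_neg, neg_nonpos]
          exact hge e
        have := hneg.2 h2
        have hdn : dot h (-γ₀) = - dot h γ₀ := by
          rw [dot_comm, dot_neg_left, dot_comm]
        rw [hdn] at this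
        linarith
      · rintro ⟨⟨h1, h2⟩, h3⟩ γ hγ hsγ
        obtain ⟨c, hc0, rfl⟩ := circuit_prop hγ₀ hγ (hsγ.trans hs₀.symm)
        have hdotc : dot h (c • γ₀) = c * dot h γ₀ := dot_smul_right c h γ₀
        constructor
        · rw [hdotc]
          exact mul_ne_zero hc0 h1
        · intro hαγ
          rcases hc0.lt_or_gt with hc | hc
          · -- c < 0 : α e * γ₀ e ≥ 0
            have hge : ∀ e, 0 ≤ α e * γ₀ e := by
              intro e
              have := hαγ e
              simp only [Pi.smul_apply, smul_eq_mul] at this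
              by_contra hcc
              push_neg at hcc
              nlinarith
            rw [hdotc]
            exact mul_neg_of_neg_of_pos hc (h3 hge)
          · have hle : ∀ e, α e * γ₀ e ≤ 0 := by
              intro e
              have := hαγ e
              simp only [Pi.smul_apply, smul_eq_mul] at this
              by_contra hcc
              push_neg at hcc
              nlinarith
            rw [hdotc]
            exact mul_neg_of_pos_of_neg hc (h2 hle)
    rw [hVeq]
    apply IsOpen.inter
    apply IsOpen.inter
    · have : {h : E → ℝ | dot h γ₀ ≠ 0} = (fun h => dot h γ₀) ⁻¹' {x | x ≠ 0} := rfl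
      rw [this]
      exact IsOpen.preimage (continuous_dot γ₀) isOpen_ne
    · exact isOpen_imp (isOpen_lt (continuous_dot γ₀) continuous_const)
    · exact isOpen_imp (isOpen_lt continuous_const (continuous_dot γ₀))
  · have : {h : E → ℝ | ∀ γ, IsCircuit (W : Set (E → ℝ)) γ → {e | γ e ≠ 0} = s →
        dot h γ ≠ 0 ∧ ((∀ e, α e * γ e ≤ 0) → dot h γ < 0)} = Set.univ := by
      ext h
      simp only [Set.mem_setOf_eq, Set.mem_univ, iff_true]
      intro γ hγ hsγ
      exact absurd ⟨γ, hγ, hsγ⟩ hex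
    rw [this]
    exact isOpen_univ

end KahlerAux

open KahlerAux in
/-- The set of feasible chambers depends only on the Kähler chamber of the
parameter: if `h₀` and `h₁` lie in the same connected component of the
complement of the root hyperplanes `γᗮ` (for `γ` a circuit of `W`), then a sign
vector `α` is `h₀`-feasible iff it is `h₁`-feasible. -/
theorem feasible_depends_only_on_kahler_chamber {E : Type*} [Fintype E]
    (W : Submodule ℝ (E → ℝ)) (h₀ h₁ : E → ℝ)
    (hcc : h₁ ∈ connectedComponentIn
      {h : E → ℝ | ∀ γ : E → ℝ, IsCircuit (W : Set (E → ℝ)) γ → dot h γ ≠ 0} h₀) :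
    ∀ α : E → ℝ, (∀ e, α e = 1 ∨ α e = -1) →
      (IsFeasible W h₀ α ↔ IsFeasible W h₁ α) := by
  intro α hα
  set A := {h : E → ℝ | ∀ γ : E → ℝ, IsCircuit (W : Set (E → ℝ)) γ → dot h γ ≠ 0} with hA
  have hA0 : h₀ ∈ A := connectedComponentIn_nonempty_iff.mp ⟨h₁, hcc⟩
  have main : ∀ x y : E → ℝ, y ∈ connectedComponentIn A x →
      IsFeasible W x α → IsFeasible W y α := by
    intro x y hcy hfx
    have hAx : x ∈ A := connectedComponentIn_nonempty_iff.mp ⟨y, hcy⟩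
    set S := {h : E → ℝ | ∀ γ, IsCircuit (W : Set (E → ℝ)) γ →
      dot h γ ≠ 0 ∧ ((∀ e, α e * γ e ≤ 0) → dot h γ < 0)} with hS
    set T := {h : E → ℝ | ∃ γ, IsCircuit (W : Set (E → ℝ)) γ ∧ (∀ e, α e * γ e ≤ 0) ∧
      0 < dot h γ} with hT
    have hsub : connectedComponentIn A x ⊆ S ∪ T := by
      intro z hz
      have hAz : z ∈ A := connectedComponentIn_subset A x hz
      by_cases hzS : ∀ γ, IsCircuit (W : Set (E → ℝ)) γ → ((∀ e, α e * γ e ≤ 0) → dot z γ < 0)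
      · left
        exact fun γ hγ => ⟨hAz γ hγ, hzS γ hγ⟩
      · right
        push_neg at hzS
        obtain ⟨γ, hγ, hαγ, hnd⟩ := hzS
        exact ⟨γ, hγ, hαγ, lt_of_le_of_ne hnd (Ne.symm (hAz γ hγ))⟩
    have hdisj : Disjoint S T := by
      rw [Set.disjoint_left]
      intro z hzS hzT
      obtain ⟨γ, hγ, hαγ, hpos⟩ := hzT
      have := (hzS γ hγ).2 hαγ
      linarith
    have hxS : x ∈ S := fun γ hγ =>
      ⟨hAx γ hγ, fun hαγ => lt_of_le_of_ne (feasible_dot_nonpos hα hfx hγ hαγ) (hAx γ hγ)⟩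
    have hccS : connectedComponentIn A x ⊆ S :=
      IsPreconnected.subset_left_of_subset_union (isOpen_S W α hα) (isOpen_T W α) hdisj hsub
        ⟨x, mem_connectedComponentIn hAx, hxS⟩ isPreconnected_connectedComponentIn
    have hyS : y ∈ S := hccS hcy
    exact feasible_of_sign W α y hα (fun γ hγ hαγ => (hyS γ hγ).2 hαγ)
  constructor
  · exact main h₀ h₁ hcc
  · intro hf1
    apply main h₁ h₀ ?_ hf1
    rw [← connectedComponentIn_eq hcc]
    exact mem_connectedComponentIn hA0
end

section
/- (Bases of a cographical arrangement are complements of spanning trees.) Let V be a nonempty finite set, E a finite set, and s, t : E → V maps with s(e) ≠ t(e) for all e ∈ E (an oriented finite multigraph Γ without loops). Assume Γ is connected, i.e. the equivalence relation on V generated by { (s(e), t(e)) : e ∈ E } is all of V × V. Let d : (V → ℤ) → (E → ℤ) be the coboundary map, (d f)(e) = f(t(e)) − f(s(e)), and let W_ℤ := image(d) ⊆ (E → ℤ) be the cut lattice, so that (E → ℤ)/W_ℤ ≅ H¹(Γ, ℤ). Then for a subset b ⊆ E, the images in (E → ℤ)/W_ℤ of the standard basis vectors { χ_e : e ∈ b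 } form a ℤ-basis of (E → ℤ)/W_ℤ if and only if E∖b is the edge set of a spanning tree of Γ, i.e. the equivalence relation on V generated by { (s(e), t(e)) : e ∈ E∖b } is all of V × V and |E∖b| = |V| − 1. -/
/-- The coboundary map `d : (V → ℤ) → (E → ℤ)`, `(d f)(e) = f(t e) - f(s e)`,
of an oriented multigraph with source and target maps `s, t : E → V`. -/
def cobdry {V E : Type*} (s t : E → V) : (V → ℤ) →ₗ[ℤ] (E → ℤ) where
  toFun f := fun e => f (t e) - f (s e)
  map_add' f g := by funext e; simp [Pi.add_apply]; ring
  map_smul' c f := by funext e; simp [Pi.smul_apply, smul_eq_mul]; ring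

/-- `T ⊆ E` is (the edge set of) a spanning tree of the oriented multigraph
with source and target maps `s, t : E → V`: the equivalence relation generated
by the edges in `T` relates all vertices, and `|T| = |V| - 1`. -/
def SpanningTree {V E : Type*} [Fintype V] (s t : E → V) (T : Set E) : Prop :=
  (∀ v w : V, Relation.EqvGen (fun a b => ∃ e ∈ T, s e = a ∧ t e = b) v w) ∧
    T.ncard = Fintype.card V - 1

section Aux

theorem eqvgenEq {α β : Type*} {r : α → α → Prop} (F : α → β)
    (h : ∀ a b, r a b → F a = F b) {v w : α} (hvw : Relation.EqvGen r v w) : F v = F w := by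
  induction hvw with
  | rel a b hab => exact h a b hab
  | refl a => rfl
  | symm a b _ ih => exact ih.symm
  | trans a b c _ _ ih1 ih2 => exact ih1.trans ih2

theorem eqvgenMono {α : Type*} {r r' : α → α → Prop}
    (h : ∀ a b, r a b → Relation.EqvGen r' a b) {v w : α} (hvw : Relation.EqvGen r v w) :
    Relation.EqvGen r' v w := by
  induction hvw with
  | rel a b hab => exact h a b hab
  | refl a => exact Relation.EqvGen.refl a
  | symm a b _ ih => exact Relation.EqvGen.symm _ _ ih
  | trans a b c _ _ ih1 ih2 => exact Relation.EqvGen.trans _ _ _ ih1 ih2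

variable {V E : Type*}

open Classical in
/-- Extension by zero at the basepoint `v₀`. -/
noncomputable def extV (R : Type*) [CommRing R] (v₀ : V) :
    ({v : V // v ≠ v₀} → R) →ₗ[R] (V → R) where
  toFun f := fun v => if h : v = v₀ then 0 else f ⟨v, h⟩
  map_add' f g := by funext v; by_cases h : v = v₀ <;> simp [h]
  map_smul' c f := by funext v; by_cases h : v = v₀ <;> simp [h]

theorem extV_apply_ne (R : Type*) [CommRing R] (v₀ : V) (f : {v : V // v ≠ v₀} → R) {v : V}
    (h : v ≠ v₀) : extV R v₀ f v = f ⟨v, h⟩ := dif_neg h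

theorem extV_apply_eq (R : Type*) [CommRing R] (v₀ : V) (f : {v : V // v ≠ v₀} → R) :
    extV R v₀ f v₀ = 0 := dif_pos rfl

open Classical in
/-- The coboundary restricted to edges in `S`, on functions vanishing at `v₀`. -/
noncomputable def psi (R : Type*) [CommRing R] (s t : E → V) (v₀ : V) (S : Set E) :
    ({v : V // v ≠ v₀} → R) →ₗ[R] (↥S → R) where
  toFun f := fun e => extV R v₀ f (t e.1) - extV R v₀ f (s e.1)
  map_add' f g := by funext e; simp only [map_add, Pi.add_apply]; ring
  map_smul' c f := by
    funext e; simp only [map_smul, Pi.smul_apply, smul_eq_mul, RingHom.id_apply]; ring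

theorem psi_apply (R : Type*) [CommRing R] (s t : E → V) (v₀ : V) (S : Set E)
    (f : {v : V // v ≠ v₀} → R) (e : ↥S) :
    psi R s t v₀ S f e = extV R v₀ f (t e.1) - extV R v₀ f (s e.1) := rfl

open Classical in
/-- Extension by zero of a function on a subset. -/
noncomputable def extS {α : Type*} (S : Set α) : (↥S → ℤ) →ₗ[ℤ] (α → ℤ) where
  toFun g := fun a => if h : a ∈ S then g ⟨a, h⟩ else 0
  map_add' f g := by funext a; by_cases h : a ∈ S <;> simp [h]
  map_smul' c f := by funext a; by_cases h : a ∈ S <;> simp [h]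

theorem extS_apply_mem {α : Type*} (S : Set α) (g : ↥S → ℤ) {a : α} (h : a ∈ S) :
    extS S g a = g ⟨a, h⟩ := dif_pos h

theorem extS_apply_not_mem {α : Type*} (S : Set α) (g : ↥S → ℤ) {a : α} (h : a ∉ S) :
    extS S g a = 0 := dif_neg h

open Classical in
/-- Indicator function of the `EqvGen r`-class of `v`. -/
noncomputable def gInd {V : Type*} (r : V → V → Prop) (v : V) : V → ℤ :=
  fun u => if Relation.EqvGen r u v then 1 else 0

theorem gInd_pos {V : Type*} {r : V → V → Prop} {v u : V}
    (h : Relation.EqvGen r u v) : gInd r v u = 1 := if_pos h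

theorem gInd_neg {V : Type*} {r : V → V → Prop} {v u : V}
    (h : ¬ Relation.EqvGen r u v) : gInd r v u = 0 := if_neg h

theorem gInd_congr {V : Type*} {r : V → V → Prop} {v a b : V}
    (h : Relation.EqvGen r a b) : gInd r v a = gInd r v b := by
  unfold gInd
  by_cases hav : Relation.EqvGen r a v
  · rw [if_pos hav, if_pos (Relation.EqvGen.trans _ _ _ (Relation.EqvGen.symm _ _ h) hav)]
  · rw [if_neg hav, if_neg (fun hbv => hav (Relation.EqvGen.trans _ _ _ h hbv))]

theorem psi_injective (R : Type*) [CommRing R] {s t : E → V} (v₀ : V) (S : Set E)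
    (hS : ∀ v w : V, Relation.EqvGen (fun a b => ∃ e ∈ S, s e = a ∧ t e = b) v w) :
    Function.Injective (psi R s t v₀ S) := by
  rw [← LinearMap.ker_eq_bot, LinearMap.ker_eq_bot']
  intro f hf
  have hval : ∀ e ∈ S, extV R v₀ f (t e) = extV R v₀ f (s e) := by
    intro e he
    have := congrFun hf ⟨e, he⟩
    rw [psi_apply, Pi.zero_apply, sub_eq_zero] at this
    exact this
  have hconst : ∀ v : V, extV R v₀ f v = extV R v₀ f v₀ := by
    intro v
    refine eqvgenEq (extV R v₀ f) ?_ (hS v v₀)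
    rintro a b' ⟨e, he, rfl, rfl⟩
    exact (hval e he).symm
  funext v
  have := hconst v.1
  rw [extV_apply_eq, extV_apply_ne R v₀ f v.2] at this
  exact this

theorem card_le_of_connected [Fintype V] [Fintype E] {s t : E → V} (v₀ : V) (S : Set E)
    (hS : ∀ v w : V, Relation.EqvGen (fun a b => ∃ e ∈ S, s e = a ∧ t e = b) v w) :
    Fintype.card V - 1 ≤ S.ncard := by
  classical
  have hinj := psi_injective ℚ v₀ S hS
  have hle := LinearMap.finrank_le_finrank_of_injective hinj
  rw [Module.finrank_fintype_fun_eq_card, Module.finrank_fintype_fun_eq_card] at hle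
  have h1 : Fintype.card {v : V // v ≠ v₀} = Fintype.card V - 1 := by
    simp [Fintype.card_subtype_compl (p := fun v : V => v = v₀)]
  have h2 : Fintype.card ↥S = S.ncard := by
    rw [← Nat.card_eq_fintype_card, Nat.card_coe_set_eq]
  omega

end Aux

/-- Bases of a cographical arrangement are complements of spanning trees: for a
connected finite oriented multigraph without loops, the images of the standard
basis vectors `{χ_e : e ∈ b}` form a ℤ-basis of `(E → ℤ)/W_ℤ ≅ H¹(Γ,ℤ)` (where
`W_ℤ` is the cut lattice, the image of the coboundary map) iff `E ∖ b` is the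
edge set of a spanning tree. -/
theorem cographical_base_iff_complement_spanning_tree
    {V E : Type*} [Fintype V] [Nonempty V] [Fintype E] [DecidableEq E]
    (s t : E → V) (hst : ∀ e, s e ≠ t e)
    (hconn : ∀ v w : V, Relation.EqvGen (fun a b => ∃ e, s e = a ∧ t e = b) v w)
    (b : Set E) :
    (∃ bas : Module.Basis b ℤ ((E → ℤ) ⧸ LinearMap.range (cobdry s t)),
        ∀ e : b, bas e = Submodule.Quotient.mk (Pi.single (e : E) 1)) ↔
      SpanningTree s t bᶜ := by
  classical
  obtain ⟨v₀⟩ := ‹Nonempty V›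
  set W := LinearMap.range (cobdry s t) with hW
  set D : ({v : V // v ≠ v₀} → ℤ) →ₗ[ℤ] (E → ℤ) := (cobdry s t).comp (extV ℤ v₀) with hD
  -- the range of the coboundary equals the range of D
  have hrange : W = LinearMap.range D := by
    apply le_antisymm
    · rintro _ ⟨f, rfl⟩
      refine ⟨fun v => f v.1 - f v₀, ?_⟩
      funext e
      have h1 : ∀ v : V, extV ℤ v₀ (fun v : {v : V // v ≠ v₀} => f v.1 - f v₀) v
          = f v - f v₀ := by
        intro v
        by_cases h : v = v₀
        · rw [h, extV_apply_eq]; ring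
        · rw [extV_apply_ne ℤ v₀ _ h]
      simp only [hD, LinearMap.comp_apply, cobdry, LinearMap.coe_mk, AddHom.coe_mk, h1]
      ring
    · rintro _ ⟨f, rfl⟩
      exact ⟨extV ℤ v₀ f, rfl⟩
  have hDinj : Function.Injective D := by
    rw [← LinearMap.ker_eq_bot, LinearMap.ker_eq_bot']
    intro f hf
    have hval : ∀ e : E, extV ℤ v₀ f (t e) = extV ℤ v₀ f (s e) := by
      intro e
      have := congrFun hf e
      simp only [hD, LinearMap.comp_apply, cobdry, LinearMap.coe_mk, AddHom.coe_mk,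
        Pi.zero_apply] at this
      rwa [sub_eq_zero] at this
    have hconst : ∀ v : V, extV ℤ v₀ f v = extV ℤ v₀ f v₀ := by
      intro v
      refine eqvgenEq (extV ℤ v₀ f) ?_ (hconn v v₀)
      rintro a b' ⟨e, rfl, rfl⟩
      exact (hval e).symm
    funext v
    have := hconst v.1
    rw [extV_apply_eq, extV_apply_ne ℤ v₀ f v.2] at this
    exact this
  set ψ : ({v : V // v ≠ v₀} → ℤ) →ₗ[ℤ] (↥bᶜ → ℤ) := psi ℤ s t v₀ bᶜ with hψ
  have hψD : ∀ (f : {v : V // v ≠ v₀} → ℤ) (e : ↥bᶜ), ψ f e = D f e.1 := by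
    intro f e; rfl
  set β : (↥b → ℤ) →ₗ[ℤ] ((E → ℤ) ⧸ W) := (Submodule.mkQ W).comp (extS b) with hβ
  have hmkD : ∀ f, Submodule.Quotient.mk (p := W) (D f) = 0 := by
    intro f
    rw [Submodule.Quotient.mk_eq_zero, hrange]
    exact ⟨f, rfl⟩
  -- Step A : the basis condition is equivalent to bijectivity of β
  have stepA : (∃ bas : Module.Basis b ℤ ((E → ℤ) ⧸ W),
      ∀ e : b, bas e = Submodule.Quotient.mk (Pi.single (e : E) 1)) ↔
      Function.Bijective β := by
    haveI : Fintype ↥b := Fintype.ofFinite _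
    have hsingle : ∀ e : ↥b, extS b (Pi.single e 1) = Pi.single (e : E) 1 := by
      intro e
      funext a
      by_cases h : a ∈ b
      · rw [extS_apply_mem b _ h, Pi.single_apply, Pi.single_apply]
        by_cases hae : a = (e : E)
        · rw [if_pos hae, if_pos (Subtype.ext hae)]
        · rw [if_neg hae, if_neg (fun hc => hae (congrArg Subtype.val hc))]
      · have hae : a ≠ (e : E) := fun hc => h (hc ▸ e.2)
        rw [extS_apply_not_mem b _ h, Pi.single_apply, if_neg hae]
    have hsum : ∀ g : ↥b → ℤ, extS b g = ∑ e : ↥b, g e • Pi.single (e : E) (1 : ℤ) := by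
      intro g
      funext a
      rw [Finset.sum_apply]
      by_cases h : a ∈ b
      · rw [Finset.sum_eq_single (⟨a, h⟩ : ↥b)]
        · rw [extS_apply_mem b _ h]
          simp [Pi.single_apply]
        · intro e _ hne
          have : a ≠ (e : E) := fun hc => hne (Subtype.ext hc.symm)
          simp [Pi.single_apply, this]
        · simp
      · have : ∀ e : ↥b, a ≠ (e : E) := fun e hc => h (hc ▸ e.2)
        rw [extS_apply_not_mem b _ h]
        refine (Finset.sum_eq_zero ?_).symm
        intro e _
        simp [Pi.single_apply, this e]
    constructor
    · rintro ⟨bas, hbas⟩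
      have hβeq : ∀ g, β g = bas.equivFun.symm g := by
        intro g
        rw [Module.Basis.equivFun_symm_apply]
        simp only [hβ, LinearMap.comp_apply, Submodule.mkQ_apply, hsum g, map_sum]
        refine Finset.sum_congr rfl ?_
        intro e _
        rw [hbas e]
        exact Submodule.Quotient.mk_smul _ _ _
      have : ⇑β = ⇑(bas.equivFun.symm : (↥b → ℤ) ≃ₗ[ℤ] _) := funext hβeq
      rw [this]
      exact (bas.equivFun.symm : (↥b → ℤ) ≃ₗ[ℤ] _).bijective
    · intro hbij
      refine ⟨(Pi.basisFun ℤ ↥b).map (LinearEquiv.ofBijective β hbij), ?_⟩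
      intro e
      rw [Module.Basis.map_apply, Pi.basisFun_apply]
      show β (Pi.single e 1) = _
      rw [hβ]
      simp only [LinearMap.comp_apply, Submodule.mkQ_apply, hsingle e]
  rw [stepA]
  -- Step B : bijectivity of β is equivalent to bijectivity of ψ
  have stepB : Function.Bijective β ↔ Function.Bijective ψ := by
    constructor
    · rintro ⟨βinj, βsurj⟩
      constructor
      · intro f f' hff'
        have h0 : ψ (f - f') = 0 := by rw [map_sub, hff', sub_self]
        have hvan : ∀ (e : E), e ∉ b → D (f - f') e = 0 := by
          intro e he
          have := congrFun h0 (⟨e, he⟩ : ↥bᶜ)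
          rw [hψD] at this
          simpa using this
        have hext : extS b (fun e : ↥b => D (f - f') e.1) = D (f - f') := by
          funext e
          by_cases h : e ∈ b
          · rw [extS_apply_mem b _ h]
          · rw [extS_apply_not_mem b _ h, hvan e h]
        have hg0 : (fun e : ↥b => D (f - f') e.1) = 0 := by
          apply βinj
          rw [map_zero, hβ]
          simp only [LinearMap.comp_apply, Submodule.mkQ_apply, hext]
          exact hmkD (f - f')
        have hD0 : D (f - f') = 0 := by rw [← hext, hg0, map_zero]
        have : f - f' = 0 := by
          apply hDinj
          rw [hD0, map_zero]
        exact sub_eq_zero.mp this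
      · intro h
        obtain ⟨g, hg⟩ := βsurj (Submodule.Quotient.mk (extS bᶜ h))
        rw [hβ] at hg
        simp only [LinearMap.comp_apply, Submodule.mkQ_apply] at hg
        rw [Submodule.Quotient.eq, hrange] at hg
        obtain ⟨f, hf⟩ := hg
        refine ⟨-f, ?_⟩
        funext e
        rw [map_neg, Pi.neg_apply, hψD]
        have he : (e : E) ∉ b := e.2
        have h2 := congrFun hf e.1
        rw [Pi.sub_apply, extS_apply_not_mem b g he, extS_apply_mem bᶜ h e.2] at h2
        rw [h2]
        ring
    · rintro ⟨ψinj, ψsurj⟩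
      constructor
      · intro g g' hgg'
        have h0 : β (g - g') = 0 := by rw [map_sub, hgg', sub_self]
        rw [hβ] at h0
        simp only [LinearMap.comp_apply, Submodule.mkQ_apply] at h0
        rw [Submodule.Quotient.mk_eq_zero, hrange] at h0
        obtain ⟨f, hf⟩ := h0
        have hψ0 : ψ f = 0 := by
          funext e
          have he : (e : E) ∉ b := e.2
          rw [hψD, hf, extS_apply_not_mem b _ he]
          rfl
        have hf0 : f = 0 := by
          apply ψinj
          rw [map_zero]
          exact hψ0
        have hext0 : extS b (g - g') = 0 := by rw [← hf, hf0, map_zero]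
        have hg00 : g - g' = 0 := by
          funext e
          have h2 := congrFun hext0 e.1
          rw [extS_apply_mem b _ e.2] at h2
          simpa using h2
        exact sub_eq_zero.mp hg00
      · intro q
        obtain ⟨x, rfl⟩ := Submodule.mkQ_surjective W q
        obtain ⟨f, hf⟩ := ψsurj (fun e : ↥bᶜ => x e.1)
        refine ⟨fun e : ↥b => x e.1 - D f e.1, ?_⟩
        rw [hβ]
        simp only [LinearMap.comp_apply, Submodule.mkQ_apply]
        have hext : extS b (fun e : ↥b => x e.1 - D f e.1) = x - D f := by
          funext a
          by_cases h : a ∈ b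
          · rw [extS_apply_mem b _ h]
            rfl
          · rw [extS_apply_not_mem b _ h]
            have h2 := congrFun hf (⟨a, h⟩ : ↥bᶜ)
            rw [hψD] at h2
            rw [Pi.sub_apply, h2, sub_self]
        rw [hext, Submodule.Quotient.eq]
        rw [sub_sub_cancel_left]
        rw [hrange]
        exact Submodule.neg_mem _ ⟨f, rfl⟩
  rw [stepB]
  -- Step C : bijectivity of ψ is equivalent to the spanning-tree condition
  have hcardV0 : Fintype.card {v : V // v ≠ v₀} = Fintype.card V - 1 := by
    simp [Fintype.card_subtype_compl (p := fun v : V => v = v₀)]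
  have hextVg : ∀ (g : V → ℤ) (v : V),
      extV ℤ v₀ (fun u : {v : V // v ≠ v₀} => g u.1 - g v₀) v = g v - g v₀ := by
    intro g v
    by_cases h : v = v₀
    · rw [h, extV_apply_eq]; ring
    · rw [extV_apply_ne ℤ v₀ _ h]
  constructor
  · rintro ⟨ψinj, ψsurj⟩
    constructor
    · -- connectivity
      by_contra hc
      push_neg at hc
      obtain ⟨v, w, hvw⟩ := hc
      set r : V → V → Prop := fun a b' => ∃ e ∈ bᶜ, s e = a ∧ t e = b' with hr
      have hψf : ψ (fun u : {v : V // v ≠ v₀} => gInd r v u.1 - gInd r v v₀) = 0 := by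
        funext e
        have hrel : Relation.EqvGen r (s e.1) (t e.1) :=
          Relation.EqvGen.rel _ _ ⟨e.1, e.2, rfl, rfl⟩
        rw [hψ, psi_apply, hextVg, hextVg, gInd_congr hrel]
        simp
      have hf0 : (fun u : {v : V // v ≠ v₀} => gInd r v u.1 - gInd r v v₀) = 0 := by
        apply ψinj
        rw [map_zero]
        exact hψf
      have hgconst : ∀ u : V, gInd r v u = gInd r v v₀ := by
        intro u
        by_cases h : u = v₀
        · rw [h]
        · have := congrFun hf0 ⟨u, h⟩
          simpa [sub_eq_zero] using this
      have h1 : gInd r v v = 1 := gInd_pos (Relation.EqvGen.refl v)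
      have h2 : gInd r v w = 0 := gInd_neg (fun h => hvw (Relation.EqvGen.symm _ _ h))
      rw [hgconst v, ← hgconst w, h2] at h1
      exact zero_ne_one h1
    · -- cardinality
      haveI : Fintype ↥bᶜ := Fintype.ofFinite _
      have heq := LinearEquiv.finrank_eq (LinearEquiv.ofBijective ψ ⟨ψinj, ψsurj⟩)
      rw [Module.finrank_fintype_fun_eq_card, Module.finrank_fintype_fun_eq_card,
        hcardV0] at heq
      rw [← Nat.card_coe_set_eq, Nat.card_eq_fintype_card]
      omega
  · rintro ⟨hTconn, hTcard⟩
    refine ⟨by rw [hψ]; exact psi_injective ℤ v₀ bᶜ hTconn, ?_⟩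
    haveI : Fintype ↥bᶜ := Fintype.ofFinite _
    have hsingle : ∀ e₀ : ↥bᶜ, ∃ f, ψ f = Pi.single e₀ (1 : ℤ) := by
      intro e₀
      refine ⟨fun u : {v : V // v ≠ v₀} =>
        gInd (fun a b' => ∃ e' ∈ bᶜ \ {e₀.1}, s e' = a ∧ t e' = b') (t e₀.1) u.1
          - gInd (fun a b' => ∃ e' ∈ bᶜ \ {e₀.1}, s e' = a ∧ t e' = b') (t e₀.1) v₀, ?_⟩
      funext e
      rw [hψ, psi_apply, hextVg, hextVg]
      by_cases he : e = e₀
      · subst he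
        have hns : ¬ Relation.EqvGen
            (fun a b' => ∃ e' ∈ bᶜ \ {(e : E)}, s e' = a ∧ t e' = b') (s e.1) (t e.1) := by
          intro hcon
          have hconn' : ∀ v w : V, Relation.EqvGen
              (fun a b' => ∃ e' ∈ bᶜ \ {(e : E)}, s e' = a ∧ t e' = b') v w := by
            intro v w
            refine eqvgenMono ?_ (hTconn v w)
            rintro a b' ⟨e', he', rfl, rfl⟩
            by_cases hh : e' = e.1
            · subst hh
              exact hcon
            · exact Relation.EqvGen.rel _ _ ⟨e', ⟨he', hh⟩, rfl, rfl⟩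
          have hle := card_le_of_connected v₀ (bᶜ \ {(e : E)}) hconn'
          rw [Set.ncard_diff_singleton_of_mem e.2] at hle
          have hpos : 1 ≤ (bᶜ : Set E).ncard := by
            rw [← Nat.card_coe_set_eq, Nat.card_eq_fintype_card]
            exact Fintype.card_pos_iff.mpr ⟨e⟩
          omega
        rw [gInd_pos (Relation.EqvGen.refl _), gInd_neg hns, Pi.single_apply, if_pos rfl]
        ring
      · have hrel : Relation.EqvGen
            (fun a b' => ∃ e' ∈ bᶜ \ {e₀.1}, s e' = a ∧ t e' = b') (s e.1) (t e.1) :=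
          Relation.EqvGen.rel _ _ ⟨e.1, ⟨e.2, fun hc => he (Subtype.ext hc)⟩, rfl, rfl⟩
        rw [gInd_congr hrel, Pi.single_apply, if_neg he]
        ring
    intro h
    have hsum : h = ∑ e₀ : ↥bᶜ, h e₀ • Pi.single e₀ (1 : ℤ) := by
      funext a
      rw [Finset.sum_apply, Finset.sum_eq_single a]
      · simp
      · intro e' _ hne
        simp [Pi.single_apply, hne.symm]
      · simp
    have hmem : h ∈ LinearMap.range ψ := by
      rw [hsum]
      refine Submodule.sum_mem _ ?_
      intro e₀ _
      obtain ⟨f, hf⟩ := hsingle e₀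
      exact Submodule.smul_mem _ _ ⟨f, hf⟩
    obtain ⟨f, hf⟩ := hmem
    exact ⟨f, hf⟩
end

section
/- (Bases of the loop and periodic arrangements are lattice translates of finite bases.) Let E be a finite set, L ⊆ ℤ^E a subgroup, and W := span_ℝ(L) ⊆ ℝ^E. Assume the unimodularity property: for every subset a ⊆ E, if the coordinate projection W → ℝ^a, w ↦ (w(e))_{e∈a}, is bijective, then the coordinate projection L → ℤ^a, γ ↦ (γ(e))_{e∈a}, is bijective. Then for every finite subset c ⊆ E × ℤ the following are equivalent: (i) the linear map W → ℝ^c sending w to the family ((e,k) ↦ w(e))_{(e,k)∈c} is bijective; (ii) there exist a subset a ⊆ E with W → ℝ^a bijective and an element γ ∈ L such that c = { (e, γ(e)) : e ∈ a }. Consequently, the bases of the periodic arrangement (the finite subsets c ⊆ E×ℤ satisfying (i)) and the bases of the loop arrangement (the subsets s ⊆ E×ℤ whose complement c := (E×ℤ)∖s is finite and satisfies (i)) are exactly the ∂γ-translates, γ ∈ L, of the bases of the corresponding finite arrangement. -/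
private lemma eval_factor {E : Type*} (W : Submodule ℝ (E → ℝ)) {ι : Type*}
    (f : ι → E) (a : Set E) (π : ι → a) (hπ : Function.Bijective π)
    (hcomm : ∀ p, ((π p : a) : E) = f p) :
    Function.Bijective (fun (w : W) (p : ι) => w.1 (f p)) ↔
      Function.Bijective (fun (w : W) (e : a) => w.1 e.1) := by
  have key : (fun (w : W) (p : ι) => w.1 (f p)) =
      (fun v : a → ℝ => v ∘ π) ∘ (fun (w : W) (e : a) => w.1 e.1) := by
    funext w p
    simp [Function.comp, hcomm p]
  rw [key]
  exact Function.Bijective.of_comp_iff' hπ.comp_right _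

/-- Bases of the loop and periodic arrangements are lattice translates of finite
bases: let `L ⊆ ℤ^E` be a subgroup and `W = span_ℝ(L) ⊆ ℝ^E`, and assume the
unimodularity property that whenever the coordinate projection `W → ℝ^a` is
bijective, so is the coordinate projection `L → ℤ^a`. Then a finite subset
`c ⊆ E × ℤ` is a base of the periodic arrangement (i.e. the evaluation map
`W → ℝ^c`, `w ↦ ((e,k) ↦ w e)`, is bijective) iff `c = { (e, γ e) : e ∈ a }`
for some base `a ⊆ E` of the finite arrangement and some `γ ∈ L`. -/
theorem periodic_bases_are_lattice_translates_of_finite_bases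
    {E : Type*} [Fintype E] (L : AddSubgroup (E → ℤ))
    (W : Submodule ℝ (E → ℝ))
    (hW : W = Submodule.span ℝ ((fun γ : E → ℤ => fun e => (γ e : ℝ)) '' (L : Set (E → ℤ))))
    (hunimod : ∀ a : Set E,
      Function.Bijective (fun (w : W) (e : a) => w.1 e.1) →
      Function.Bijective (fun (γ : L) (e : a) => γ.1 e.1)) :
    ∀ c : Finset (E × ℤ),
      Function.Bijective (fun (w : W) (p : c) => w.1 p.1.1) ↔
        ∃ a : Set E, Function.Bijective (fun (w : W) (e : a) => w.1 e.1) ∧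
          ∃ γ ∈ L, (c : Set (E × ℤ)) = {p : E × ℤ | p.1 ∈ a ∧ p.2 = γ p.1} := by
  intro c
  classical
  constructor
  · intro h
    -- uniqueness of the second coordinate
    have huniq : ∀ p q : {x // x ∈ c}, (p : E × ℤ).1 = (q : E × ℤ).1 → p = q := by
      intro p q hpq
      by_contra hne
      obtain ⟨w, hw⟩ := h.2 (fun r => if r = q then (1 : ℝ) else 0)
      have h1 : w.1 (p : E × ℤ).1 = 0 := by
        have := congrFun hw p
        simpa [hne] using this
      have h2 : w.1 (q : E × ℤ).1 = 1 := by
        have := congrFun hw q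
        simpa using this
      rw [hpq, h2] at h1
      exact one_ne_zero h1
    set a : Set E := Prod.fst '' (c : Set (E × ℤ)) with ha
    have hπmem : ∀ p : {x // x ∈ c}, (p : E × ℤ).1 ∈ a := by
      intro p
      exact ⟨(p : E × ℤ), p.2, rfl⟩
    set π : {x // x ∈ c} → a := fun p => ⟨(p : E × ℤ).1, hπmem p⟩ with hπdef
    have hπ : Function.Bijective π := by
      constructor
      · intro p q hpq
        exact huniq p q (congrArg Subtype.val hpq)
      · rintro ⟨e, x, hx, rfl⟩
        exact ⟨⟨x, hx⟩, rfl⟩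
    have ha_bij : Function.Bijective (fun (w : W) (e : a) => w.1 e.1) :=
      (eval_factor W (fun p : {x // x ∈ c} => (p : E × ℤ).1) a π hπ (fun p => rfl)).1 h
    refine ⟨a, ha_bij, ?_⟩
    -- inverse of π
    set σ : a → {x // x ∈ c} := ⇑(Equiv.ofBijective π hπ).symm with hσdef
    have hσ : ∀ e : a, π (σ e) = e := fun e => (Equiv.ofBijective π hπ).apply_symm_apply e
    have hσ1 : ∀ e : a, ((σ e : E × ℤ)).1 = (e : E) := by
      intro e
      have := congrArg Subtype.val (hσ e)
      exact this
    obtain ⟨γ, hγ⟩ := (hunimod a ha_bij).2 (fun e => ((σ e : E × ℤ)).2)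
    refine ⟨γ.1, γ.2, ?_⟩
    ext p
    constructor
    · intro hp
      refine ⟨⟨p, hp, rfl⟩, ?_⟩
      set e : a := ⟨p.1, ⟨p, hp, rfl⟩⟩ with he
      have h1 : γ.1 p.1 = ((σ e : E × ℤ)).2 := congrFun hγ e
      have h2 : (⟨p, hp⟩ : {x // x ∈ c}) = σ e := by
        apply huniq
        rw [hσ1 e]
      rw [h1, ← congrArg (fun q : {x // x ∈ c} => (q : E × ℤ).2) h2]
    · rintro ⟨hpa, hp2⟩
      set e : a := ⟨p.1, hpa⟩ with he
      have h1 : γ.1 p.1 = ((σ e : E × ℤ)).2 := congrFun hγ e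
      have hp' : p = (σ e : E × ℤ) := by
        apply Prod.ext
        · exact (hσ1 e).symm
        · rw [hp2, h1]
      rw [hp']
      exact (σ e).2
  · rintro ⟨a, ha_bij, γ, hγL, hc⟩
    have hmem : ∀ p : E × ℤ, p ∈ c ↔ p.1 ∈ a ∧ p.2 = γ p.1 := by
      intro p
      rw [← Finset.mem_coe, hc]
      rfl
    have hπmem : ∀ p : {x // x ∈ c}, (p : E × ℤ).1 ∈ a :=
      fun p => ((hmem (p : E × ℤ)).1 p.2).1
    set π : {x // x ∈ c} → a := fun p => ⟨(p : E × ℤ).1, hπmem p⟩ with hπdef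
    have hπ : Function.Bijective π := by
      constructor
      · intro p q hpq
        have h1 : (p : E × ℤ).1 = (q : E × ℤ).1 := congrArg Subtype.val hpq
        have h2 : (p : E × ℤ).2 = (q : E × ℤ).2 := by
          rw [((hmem _).1 p.2).2, ((hmem _).1 q.2).2, h1]
        exact Subtype.ext (Prod.ext h1 h2)
      · rintro ⟨e, he⟩
        exact ⟨⟨(e, γ e), (hmem (e, γ e)).2 ⟨he, rfl⟩⟩, rfl⟩
    exact (eval_factor W (fun p : {x // x ∈ c} => (p : E × ℤ).1) a π hπ (fun p => rfl)).2 ha_bij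
end
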